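/- arXiv:1601.00611 — 3 statements merged into one kernel-verified Lean document; each statement's English description precedes it below -/
import Mathlib

section
/- Let Q be an 𝔪_ξ-primary ideal with orthogonal primal-dual bases B = {(x−ξ)^{αᵢ}} and Λ = {Λᵢ} as in the orthogonal primal-dual basis lemma, with exponent set E. Then the transpose of the matrix M_i of multiplication by (xᵢ − ξᵢ) on ℂ[x]/Q in the basis B is strictly upper triangular with entries (M_i^t)_{k,j} = ν_{α_j, α_k + e_i}, the coefficient of (1/(α_k+e_i)!)∂_ξ^{α_k+e_i} in Λ_j; moreover ν_{α_j, α_k+e_i} = 1 if α_j = α_k + e_i, and 0 if α_k + e_i ∈ E with α_j ≠ α_k + e_i. -/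
open MvPolynomial

noncomputable section

/-- Iterated partial derivative operator `∂^β` on polynomials. -/
def pdiff {n : ℕ} {K : Type} [CommSemiring K] (β : Fin n →₀ ℕ) :
    Module.End K (MvPolynomial (Fin n) K) :=
  (List.ofFn fun i : Fin n =>
    ((MvPolynomial.pderiv i : Derivation K _ _).toLinearMap ^ (β i))).prod

/-- Action of a polynomial differential operator at the point ξ:
`Λ = Σ_β c_β ∂^β ↦ (p ↦ Σ_β c_β (∂^β p)(ξ))`. -/
def dapply {n : ℕ} (ξ : Fin n → ℂ) (Λ : (Fin n →₀ ℕ) →₀ ℂ)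
    (p : MvPolynomial (Fin n) ℂ) : ℂ :=
  Λ.sum fun β c => c * eval ξ (pdiff β p)

def dapplyL {n : ℕ} (ξ : Fin n → ℂ) (p : MvPolynomial (Fin n) ℂ) :
    ((Fin n →₀ ℕ) →₀ ℂ) →ₗ[ℂ] ℂ where
  toFun Λ := dapply ξ Λ p
  map_add' a b := Finsupp.sum_add_index' (fun β => zero_mul _)
    (fun β c d => add_mul c d _)
  map_smul' c a := by
    classical
    simp only [RingHom.id_apply, smul_eq_mul, dapply]
    rw [Finsupp.sum_smul_index fun β => zero_mul ((eval ξ) ((pdiff β) p)), Finsupp.mul_sum]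
    exact Finsupp.sum_congr fun β _ => mul_assoc _ _ _

/-- The space `I^⊥ ∩ ℂ[∂_ξ]` of polynomial differential operators at ξ
annihilating the ideal `I`. -/
def dualSpace {n : ℕ} (I : Ideal (MvPolynomial (Fin n) ℂ)) (ξ : Fin n → ℂ) :
    Submodule ℂ ((Fin n →₀ ℕ) →₀ ℂ) :=
  ⨅ p ∈ I, LinearMap.ker (dapplyL ξ p)

lemma mem_dualSpace {n : ℕ} {I : Ideal (MvPolynomial (Fin n) ℂ)} {ξ : Fin n → ℂ}
    {Λ : (Fin n →₀ ℕ) →₀ ℂ} : Λ ∈ dualSpace I ξ ↔ ∀ p ∈ I, dapply ξ Λ p = 0 := by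
  simp only [dualSpace, Submodule.mem_iInf, LinearMap.mem_ker]
  rfl

/-- The multiplicity of ξ as a root of I. -/
def mult {n : ℕ} (I : Ideal (MvPolynomial (Fin n) ℂ)) (ξ : Fin n → ℂ) : ℕ :=
  Module.finrank ℂ (dualSpace I ξ)

/-- Order (total degree in the ∂ variables) of a polynomial differential operator. -/
def ordD {n : ℕ} (Λ : (Fin n →₀ ℕ) →₀ ℂ) : ℕ :=
  Λ.support.sup fun β => β.sum fun _ k => k

/-- The nil-index of I at ξ: maximal order of elements of the dual space. -/
def nilIndex {n : ℕ} (I : Ideal (MvPolynomial (Fin n) ℂ)) (ξ : Fin n → ℂ) : ℕ :=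
  sSup {t | ∃ Λ ∈ dualSpace I ξ, Λ ≠ 0 ∧ ordD Λ = t}

/-- The maximal ideal at ξ. -/
def maxIdeal {n : ℕ} (ξ : Fin n → ℂ) : Ideal (MvPolynomial (Fin n) ℂ) :=
  Ideal.span (Set.range fun i => X i - C (ξ i))

/-- `(x-ξ)^α`. -/
def xpow {n : ℕ} (ξ : Fin n → ℂ) (α : Fin n →₀ ℕ) : MvPolynomial (Fin n) ℂ :=
  ∏ i : Fin n, (X i - C (ξ i)) ^ (α i)

/-- multi-index factorial -/
def mfact {n : ℕ} (β : Fin n →₀ ℕ) : ℕ := ∏ i : Fin n, Nat.factorial (β i)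

def mdeg {n : ℕ} (β : Fin n →₀ ℕ) : ℕ := β.sum fun _ k => k


section Aux
variable {n : ℕ} (ξ : Fin n → ℂ)

lemma pderiv_lin_base (i : Fin n) :
    pderiv i (X i - C (ξ i) : MvPolynomial (Fin n) ℂ) = 1 := by
  simp [pderiv_X]

lemma pderiv_lin_pow (i : Fin n) (m : ℕ) :
    pderiv i ((X i - C (ξ i) : MvPolynomial (Fin n) ℂ) ^ m)
      = (m : MvPolynomial (Fin n) ℂ) * (X i - C (ξ i)) ^ (m - 1) := by
  rw [Derivation.leibniz_pow, pderiv_lin_base]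
  simp [smul_eq_mul, mul_comm]

lemma E1 (i : Fin n) (k m : ℕ) :
    ((pderiv i (R := ℂ) (σ := Fin n)).toLinearMap ^ k) ((X i - C (ξ i)) ^ m)
      = (m.descFactorial k : ℂ) • (X i - C (ξ i)) ^ (m - k) := by
  induction k with
  | zero => simp
  | succ k ih =>
      rw [pow_succ', Module.End.mul_apply, ih, map_smul]
      have : (pderiv i (R := ℂ)).toLinearMap ((X i - C (ξ i)) ^ (m - k))
          = ((m - k : ℕ) : MvPolynomial (Fin n) ℂ) * (X i - C (ξ i)) ^ (m - k - 1) := by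
        exact pderiv_lin_pow ξ i (m - k)
      rw [this, Nat.sub_sub, Nat.descFactorial_succ]
      simp only [smul_eq_C_mul]
      rw [← map_natCast (C : ℂ →+* MvPolynomial (Fin n) ℂ) (m - k), ← mul_assoc, ← C_mul]
      push_cast
      ring_nf

lemma E2 (i j : Fin n) (h : j ≠ i) (m : ℕ) :
    pderiv i ((X j - C (ξ j) : MvPolynomial (Fin n) ℂ) ^ m) = 0 := by
  rw [Derivation.leibniz_pow]
  simp [pderiv_X, h]

lemma zero_prod {s : Finset (Fin n)} {h : Fin n → MvPolynomial (Fin n) ℂ} (i : Fin n)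
    (hz : ∀ j ∈ s, pderiv i (h j) = 0) :
    pderiv i (∏ j ∈ s, h j) = 0 := by
  classical
  induction s using Finset.induction_on with
  | empty => simp
  | @insert a s hmem ih =>
      rw [Finset.prod_insert hmem, Derivation.leibniz, hz a (Finset.mem_insert_self a s),
        ih fun j hj => hz j (Finset.mem_insert_of_mem hj)]
      simp

lemma E3 (i : Fin n) (k : ℕ) (p q : MvPolynomial (Fin n) ℂ) (hq : pderiv i q = 0) :
    ((pderiv i (R := ℂ)).toLinearMap ^ k) (q * p)
      = q * ((pderiv i (R := ℂ)).toLinearMap ^ k) p := by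
  induction k generalizing p with
  | zero => simp
  | succ k ih =>
      rw [pow_succ, Module.End.mul_apply, Module.End.mul_apply]
      have h2 : ∀ r, (pderiv i (R := ℂ)).toLinearMap r = pderiv i r := fun r => rfl
      have h3 : (pderiv i (R := ℂ)).toLinearMap (q * p) = q * (pderiv i (R := ℂ)).toLinearMap p := by
        rw [h2, h2, Derivation.leibniz, hq]
        simp [smul_eq_mul, mul_comm]
      rw [h3, ih]

lemma sep (γ : Fin n →₀ ℕ) (l : List (Fin n)) (hl : l.Nodup) (m : Fin n → ℕ) :
    ((l.map fun i => (pderiv i (R := ℂ) (σ := Fin n)).toLinearMap ^ γ i).prod)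
      (∏ i : Fin n, (X i - C (ξ i)) ^ m i)
    = (∏ i ∈ l.toFinset, ((m i).descFactorial (γ i) : ℂ)) •
      ∏ i : Fin n, (X i - C (ξ i)) ^ (if i ∈ l then m i - γ i else m i) := by
  classical
  induction l with
  | nil => simp
  | cons a l ih =>
      obtain ⟨ha, hl'⟩ := List.nodup_cons.mp hl
      rw [List.map_cons, List.prod_cons, Module.End.mul_apply, ih hl', map_smul]
      set m' : Fin n → ℕ := fun i => if i ∈ l then m i - γ i else m i with hm'
      have hsplit : (∏ i : Fin n, (X i - C (ξ i)) ^ m' i)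
          = (∏ i ∈ Finset.univ.erase a, (X i - C (ξ i)) ^ m' i) * (X a - C (ξ a)) ^ m' a :=
        (Finset.prod_erase_mul Finset.univ _ (Finset.mem_univ a)).symm
      have hq : pderiv a (∏ i ∈ Finset.univ.erase a, (X i - C (ξ i)) ^ m' i) = 0 :=
        zero_prod a fun j hj => E2 ξ a j (Finset.ne_of_mem_erase hj) _
      have hma : m' a = m a := by simp [hm', ha]
      rw [hsplit, E3 a (γ a) _ _ hq, E1 ξ, hma]
      rw [mul_smul_comm, smul_smul]
      congr 1
      · rw [List.toFinset_cons, Finset.prod_insert (by simpa using ha), mul_comm]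
      · rw [← Finset.prod_erase_mul Finset.univ
          (fun i => (X i - C (ξ i)) ^ (if i ∈ a :: l then m i - γ i else m i))
          (Finset.mem_univ a)]
        congr 1
        · apply Finset.prod_congr rfl
          intro i hi
          have : i ≠ a := Finset.ne_of_mem_erase hi
          simp [hm', List.mem_cons, this]
        · simp [List.mem_cons]

lemma pdiff_xpow (γ β : Fin n →₀ ℕ) :
    pdiff γ (xpow ξ β)
      = (∏ i : Fin n, ((β i).descFactorial (γ i) : ℂ)) •
        ∏ i : Fin n, (X i - C (ξ i)) ^ (β i - γ i) := by
  classical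
  have h := sep ξ γ (List.finRange n) (List.nodup_finRange n) (fun i => β i)
  have huniv : (List.finRange n).toFinset = Finset.univ := by
    ext i; simp [List.mem_finRange]
  rw [huniv] at h
  simp only [List.mem_finRange, if_true] at h
  rw [pdiff, List.ofFn_eq_map]
  exact h

lemma eval_pdiff_xpow (γ β : Fin n →₀ ℕ) :
    eval ξ (pdiff γ (xpow ξ β)) = if γ = β then (mfact β : ℂ) else 0 := by
  classical
  rw [pdiff_xpow, smul_eq_C_mul, map_mul, eval_C, map_prod]
  simp only [map_pow, map_sub, eval_X, eval_C, sub_self]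
  by_cases h : γ = β
  · subst h
    simp [Nat.descFactorial_self, mfact, Nat.cast_prod]
  · rw [if_neg h]
    have : ∃ i, γ i ≠ β i := by
      by_contra hc
      push_neg at hc
      exact h (Finsupp.ext hc)
    obtain ⟨i, hi⟩ := this
    rcases Nat.lt_or_ge (γ i) (β i) with hlt | hge
    · apply mul_eq_zero_of_right
      apply Finset.prod_eq_zero (Finset.mem_univ i)
      rw [zero_pow]
      omega
    · apply mul_eq_zero_of_left
      apply Finset.prod_eq_zero (Finset.mem_univ i)
      rw [Nat.descFactorial_eq_zero_iff_lt.mpr (by omega), Nat.cast_zero]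

lemma dapply_xpow (Λ : (Fin n →₀ ℕ) →₀ ℂ) (β : Fin n →₀ ℕ) :
    dapply ξ Λ (xpow ξ β) = Λ β * (mfact β : ℂ) := by
  classical
  rw [dapply]
  have : (Λ.sum fun γ c => c * eval ξ (pdiff γ (xpow ξ β)))
      = Λ.sum fun γ c => if γ = β then c * (mfact β : ℂ) else 0 := by
    apply Finsupp.sum_congr
    intro γ _
    rw [eval_pdiff_xpow]
    split <;> simp
  rw [this]
  rw [Finsupp.sum_ite_eq' Λ β fun _ c => c * (mfact β : ℂ)]
  split
  · rfl
  · rename_i hns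
    rw [Finsupp.notMem_support_iff.mp hns, zero_mul]

def dapplyP (Λ : (Fin n →₀ ℕ) →₀ ℂ) : MvPolynomial (Fin n) ℂ →ₗ[ℂ] ℂ where
  toFun p := dapply ξ Λ p
  map_add' p q := by
    simp only [dapply, map_add, mul_add]
    exact Finsupp.sum_add
  map_smul' c p := by
    simp only [RingHom.id_apply, smul_eq_mul, dapply]
    rw [Finsupp.mul_sum]
    apply Finsupp.sum_congr
    intro γ _
    rw [map_smul, smul_eq_C_mul, map_mul, eval_C]
    ring

lemma xpow_succ (i : Fin n) (β : Fin n →₀ ℕ) :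
    xpow ξ (β + Finsupp.single i 1) = (X i - C (ξ i)) * xpow ξ β := by
  classical
  rw [xpow, xpow]
  have : ∀ j : Fin n, (X j - C (ξ j) : MvPolynomial (Fin n) ℂ) ^ ((β + Finsupp.single i 1 : Fin n →₀ ℕ) j)
      = (X j - C (ξ j)) ^ (β j) * (X j - C (ξ j)) ^ ((Finsupp.single i 1) j) := by
    intro j; rw [Finsupp.add_apply, pow_add]
  rw [Finset.prod_congr rfl fun j _ => this j, Finset.prod_mul_distrib]
  rw [mul_comm]
  congr 1
  rw [Finset.prod_eq_single i (fun j _ hj => by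
    rw [Finsupp.single_apply, if_neg (fun h => hj h.symm), pow_zero])
    (fun h => absurd (Finset.mem_univ i) h)]
  rw [Finsupp.single_apply, if_pos rfl, pow_one]

lemma mdeg_add_single (i : Fin n) (β : Fin n →₀ ℕ) :
    mdeg (β + Finsupp.single i 1) = mdeg β + 1 := by
  classical
  rw [mdeg, mdeg, Finsupp.sum_add_index (fun _ _ => rfl) (fun _ _ _ _ => rfl)]
  congr 1
  rw [Finsupp.sum_single_index rfl]

lemma mfact_ne_zero (β : Fin n →₀ ℕ) : (mfact β : ℂ) ≠ 0 := by
  have : mfact β ≠ 0 := by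
    rw [mfact]
    exact Finset.prod_ne_zero_iff.mpr fun i _ => Nat.factorial_ne_zero _
  exact Nat.cast_ne_zero.mpr this

end Aux


lemma repr_eq {n δ : ℕ} (ξ : Fin n → ℂ) (Q : Ideal (MvPolynomial (Fin n) ℂ))
    (α : Fin δ → (Fin n →₀ ℕ)) (Λ : Fin δ → ((Fin n →₀ ℕ) →₀ ℂ))
    (b : Module.Basis (Fin δ) ℂ (MvPolynomial (Fin n) ℂ ⧸ Q))
    (hb : ∀ i, b i = Ideal.Quotient.mk Q (xpow ξ (α i)))
    (hdual : ∀ i, ∀ p ∈ Q, dapply ξ (Λ i) p = 0)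
    (hpair : ∀ i j, dapply ξ (Λ i) (xpow ξ (α j)) = if i = j then 1 else 0)
    (j : Fin δ) (p : MvPolynomial (Fin n) ℂ) :
    dapply ξ (Λ j) p = b.repr (Ideal.Quotient.mk Q p) j := by
  classical
  set c : Fin δ → ℂ := fun k => b.repr (Ideal.Quotient.mk Q p) k with hc
  set r : MvPolynomial (Fin n) ℂ := ∑ k : Fin δ, c k • xpow ξ (α k) with hr
  have hmkr : Ideal.Quotient.mk Q r = Ideal.Quotient.mk Q p := by
    have : Ideal.Quotient.mk Q r = Ideal.Quotient.mkₐ ℂ Q r := by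
      rw [Ideal.Quotient.mkₐ_eq_mk]
    rw [this, hr, map_sum]
    have : ∀ k : Fin δ, Ideal.Quotient.mkₐ ℂ Q (c k • xpow ξ (α k)) = c k • b k := by
      intro k
      rw [map_smul, hb k, Ideal.Quotient.mkₐ_eq_mk]
    rw [Finset.sum_congr rfl fun k _ => this k]
    exact b.sum_repr (Ideal.Quotient.mk Q p)
  have hmem : p - r ∈ Q := by
    rw [← Ideal.Quotient.eq_zero_iff_mem, map_sub, hmkr, sub_self]
  have h1 : dapply ξ (Λ j) p = dapply ξ (Λ j) r := by
    have h2 : dapplyP ξ (Λ j) (p - r) = 0 := hdual j _ hmem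
    have h3 : dapplyP ξ (Λ j) p - dapplyP ξ (Λ j) r = 0 := by
      rw [← map_sub]; exact h2
    have := sub_eq_zero.mp h3
    exact this
  rw [h1]
  have h4 : dapplyP ξ (Λ j) r = ∑ k : Fin δ, c k * dapply ξ (Λ j) (xpow ξ (α k)) := by
    rw [hr, map_sum]
    apply Finset.sum_congr rfl
    intro k _
    rw [map_smul, smul_eq_mul]
    rfl
  have h5 : dapply ξ (Λ j) r = ∑ k : Fin δ, c k * dapply ξ (Λ j) (xpow ξ (α k)) := h4
  rw [h5]
  simp only [hpair, mul_ite, mul_one, mul_zero]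
  rw [Finset.sum_ite_eq Finset.univ j c, if_pos (Finset.mem_univ j)]

/-- structure of the multiplication matrices.  In the orthogonal
primal-dual pair of bases `B`, `Λ` of `ℂ[x]/Q` and its dual, the matrix of
multiplication by `(xᵢ−ξᵢ)` satisfies `(Mᵢ)_{j,k} = ν_{αⱼ, α_k + eᵢ}` (the
coefficient of `(1/(α_k+eᵢ)!)∂^{α_k+eᵢ}` in `Λⱼ`); its transpose is strictly
upper triangular, and `ν_{αⱼ, α_k+eᵢ} = 1` if `αⱼ = α_k + eᵢ`, `= 0` if
`α_k + eᵢ ∈ E` with `αⱼ ≠ α_k + eᵢ`. -/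
theorem multiplication_matrix_structure {n δ : ℕ} (hδ : 0 < δ)
    (Q : Ideal (MvPolynomial (Fin n) ℂ)) (ξ : Fin n → ℂ)
    (hprim : Q.IsPrimary) (hrad : Q.radical = maxIdeal ξ)
    (α : Fin δ → (Fin n →₀ ℕ)) (Λ : Fin δ → ((Fin n →₀ ℕ) →₀ ℂ))
    (b : Module.Basis (Fin δ) ℂ (MvPolynomial (Fin n) ℂ ⧸ Q))
    (hb : ∀ i, b i = Ideal.Quotient.mk Q (xpow ξ (α i)))
    (h0 : α ⟨0, hδ⟩ = 0)
    (hdual : ∀ i, ∀ p ∈ Q, dapply ξ (Λ i) p = 0)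
    (hlead : ∀ i, (Λ i) (α i) = (mfact (α i) : ℂ)⁻¹)
    (hsupp : ∀ i β, β ∈ (Λ i).support →
      mdeg β ≤ mdeg (α i) ∧ (β = α i ∨ β ∉ Set.range α))
    (hpair : ∀ i j, dapply ξ (Λ i) (xpow ξ (α j)) = if i = j then 1 else 0)
    (hord : ∀ i j, i ≤ j → mdeg (α i) ≤ mdeg (α j)) :
    -- ν_{αⱼ,β} : the coefficient of (1/β!)∂^β in Λⱼ
    let ν : Fin δ → (Fin n →₀ ℕ) → ℂ := fun j β => (Λ j) β * (mfact β : ℂ)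
    -- Mᵢ : matrix of multiplication by (xᵢ−ξᵢ) on ℂ[x]/Q in the basis b
    let M : Fin n → Matrix (Fin δ) (Fin δ) ℂ := fun i =>
      LinearMap.toMatrix b b
        (LinearMap.mulLeft ℂ (Ideal.Quotient.mk Q (X i - C (ξ i))))
    -- entries of the multiplication matrices are the dual coefficients
    (∀ (i : Fin n) (j k : Fin δ),
      M i j k = ν j (α k + Finsupp.single i 1)) ∧
    -- strict (transposed upper) triangularity
    (∀ (i : Fin n) (j k : Fin δ), j ≤ k → M i j k = 0) ∧
    -- the special values of ν
    (∀ (i : Fin n) (j k : Fin δ), α j = α k + Finsupp.single i 1 →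
      ν j (α k + Finsupp.single i 1) = 1) ∧
    (∀ (i : Fin n) (j k : Fin δ), (α k + Finsupp.single i 1) ∈ Set.range α →
      α j ≠ α k + Finsupp.single i 1 → ν j (α k + Finsupp.single i 1) = 0) := by
  classical
  intro ν M
  have hM : ∀ (i : Fin n) (j k : Fin δ),
      M i j k = (Λ j) (α k + Finsupp.single i 1) * (mfact (α k + Finsupp.single i 1) : ℂ) := by
    intro i j k
    show (LinearMap.toMatrix b b
        (LinearMap.mulLeft ℂ (Ideal.Quotient.mk Q (X i - C (ξ i))))) j k = _
    rw [LinearMap.toMatrix_apply, LinearMap.mulLeft_apply, hb k, ← map_mul, ← xpow_succ,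
      ← repr_eq ξ Q α Λ b hb hdual hpair j, dapply_xpow]
  refine ⟨fun i j k => hM i j k, ?_, ?_, ?_⟩
  · intro i j k hjk
    rw [hM i j k]
    have hz : (Λ j) (α k + Finsupp.single i 1) = 0 := by
      by_contra hne
      have hmem := Finsupp.mem_support_iff.mpr hne
      have h1 := (hsupp j _ hmem).1
      have h2 := hord j k hjk
      rw [mdeg_add_single] at h1
      omega
    rw [hz, zero_mul]
  · intro i j k h
    show (Λ j) (α k + Finsupp.single i 1) * (mfact (α k + Finsupp.single i 1) : ℂ) = 1
    rw [← h, hlead j]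
    exact inv_mul_cancel₀ (mfact_ne_zero (α j))
  · intro i j k hmem hne
    show (Λ j) (α k + Finsupp.single i 1) * (mfact (α k + Finsupp.single i 1) : ℂ) = 0
    obtain ⟨l, hl⟩ := hmem
    rw [← dapply_xpow, ← hl, hpair j l, if_neg]
    intro h
    exact hne (h ▸ hl ▸ rfl)


end
end

section
/- Let M₁(μ),…,Mₙ(μ) be the parametric multiplication matrices over K[μ] associated to an exponent set E connected to 1, and define the parametric normal form N_{z,μ}(p) = Σ_γ (1/γ!)∂_z^γ(p)·M(μ)^γ[1] ∈ K[z,μ]^δ, where [1] = (1,0,…,0)^t. Then for every p ∈ K[x] and every i, N_{z,μ}(xᵢ·p) = zᵢ·N_{z,μ}(p) + Mᵢ(μ)·N_{z,μ}(p) + O_{i,μ}(p), where O_{i,μ} is a K-linear map from K[x] to vectors with entries in the commutator ideal C generated by the entries of Mᵢ(μ)Mⱼ(μ) − Mⱼ(μ)Mᵢ(μ) for all i,j. -/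
open MvPolynomial

noncomputable section

section AuxLemmas

section ListLemmas
variable {M : Type*} [Monoid M]

lemma ofFn_prod_mul : ∀ {m : ℕ} (f g : Fin m → M),
    (∀ i j, Commute (g i) (f j)) →
    (List.ofFn f).prod * (List.ofFn g).prod = (List.ofFn fun i => f i * g i).prod := by
  intro m
  induction m with
  | zero => intro f g _; simp
  | succ m ih =>
    intro f g h
    simp only [List.ofFn_succ, List.prod_cons]
    have hc : Commute (g 0) (List.ofFn fun i : Fin m => f i.succ).prod := by
      apply Commute.list_prod_right
      intro x hx
      rw [List.mem_ofFn] at hx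
      obtain ⟨i, rfl⟩ := hx
      exact h 0 i.succ
    calc f 0 * (List.ofFn fun i : Fin m => f i.succ).prod *
          (g 0 * (List.ofFn fun i : Fin m => g i.succ).prod)
        = f 0 * (((List.ofFn fun i : Fin m => f i.succ).prod * g 0) *
            (List.ofFn fun i : Fin m => g i.succ).prod) := by
          simp [mul_assoc]
      _ = f 0 * ((g 0 * (List.ofFn fun i : Fin m => f i.succ).prod) *
            (List.ofFn fun i : Fin m => g i.succ).prod) := by rw [hc.eq]
      _ = (f 0 * g 0) * ((List.ofFn fun i : Fin m => f i.succ).prod *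
            (List.ofFn fun i : Fin m => g i.succ).prod) := by simp [mul_assoc]
      _ = (f 0 * g 0) * (List.ofFn fun i : Fin m => f i.succ * g i.succ).prod := by
          rw [ih _ _ fun i j => h i.succ j.succ]

lemma ofFn_prod_single : ∀ {m : ℕ} (f : Fin m → M) (i : Fin m),
    (∀ j, j ≠ i → f j = 1) → (List.ofFn f).prod = f i := by
  intro m
  induction m with
  | zero => exact fun _ i => i.elim0
  | succ m ih =>
    intro f i h
    simp only [List.ofFn_succ, List.prod_cons]
    rcases Fin.eq_zero_or_eq_succ i with rfl | ⟨i', rfl⟩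
    · have : (List.ofFn fun j : Fin m => f j.succ).prod = 1 := by
        apply List.prod_eq_one
        intro x hx
        rw [List.mem_ofFn] at hx
        obtain ⟨j, rfl⟩ := hx
        exact h j.succ (Fin.succ_ne_zero j)
      rw [this, mul_one]
    · rw [h 0 (Ne.symm (Fin.succ_ne_zero i')), one_mul]
      exact ih _ i' fun j hj => h j.succ (by simpa using hj)

variable {n : ℕ} (a : Fin n → M)

lemma prodPow_add (ha : ∀ i j, Commute (a i) (a j)) (β γ : Fin n →₀ ℕ) :
    (List.ofFn fun l => a l ^ (β + γ) l).prod =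
      (List.ofFn fun l => a l ^ β l).prod * (List.ofFn fun l => a l ^ γ l).prod := by
  rw [ofFn_prod_mul _ _ fun i j => ((ha i j).pow_pow _ _)]
  simp [pow_add]

lemma prodPow_single (i : Fin n) :
    (List.ofFn fun l => a l ^ (Finsupp.single i 1) l).prod = a i := by
  rw [ofFn_prod_single _ i]
  · simp
  · intro j hj
    simp [Finsupp.single_apply, (Ne.symm hj : ¬ i = j)]

lemma prodPow_zero :
    (List.ofFn fun l => a l ^ (0 : Fin n →₀ ℕ) l).prod = 1 := by
  apply List.prod_eq_one
  intro x hx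
  rw [List.mem_ofFn] at hx
  obtain ⟨j, rfl⟩ := hx
  simp

end ListLemmas


section PdiffLemmas
lemma pderiv_comm'' {n : ℕ} {K : Type} [CommSemiring K] (i j : Fin n)
    (p : MvPolynomial (Fin n) K) :
    pderiv i (pderiv j p) = pderiv j (pderiv i p) := by
  induction p using MvPolynomial.induction_on' with
  | monomial s a =>
    rcases eq_or_ne i j with rfl | hij
    · rfl
    · simp only [pderiv_monomial, Finsupp.tsub_apply, Finsupp.single_apply,
        hij, Ne.symm hij, if_false, Nat.sub_zero]
      rw [tsub_right_comm]
      ring_nf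
  | add p q hp hq => simp [hp, hq]

variable {n : ℕ} {K : Type} [CommSemiring K]

lemma pderiv_commute (i j : Fin n) :
    Commute ((pderiv i : Derivation K (MvPolynomial (Fin n) K) _).toLinearMap)
      ((pderiv j : Derivation K (MvPolynomial (Fin n) K) _).toLinearMap) :=
  LinearMap.ext fun p => pderiv_comm'' i j p

lemma pdiff_zero : pdiff (K := K) (0 : Fin n →₀ ℕ) = 1 :=
  prodPow_zero _

lemma pdiff_add (β γ : Fin n →₀ ℕ) :
    pdiff (K := K) (β + γ) = pdiff β * pdiff γ :=
  prodPow_add _ (fun i j => pderiv_commute i j) β γ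

lemma pdiff_add_single (β : Fin n →₀ ℕ) (j : Fin n) (p : MvPolynomial (Fin n) K) :
    pdiff (β + Finsupp.single j 1) p = pdiff β (pderiv j p) := by
  rw [pdiff_add, Module.End.mul_apply]
  congr 1
  exact congrFun (congrArg _ (prodPow_single _ j)) p

lemma mdeg_add (β γ : Fin n →₀ ℕ) :
    ((β + γ).sum fun _ k => k) = (β.sum fun _ k => k) + (γ.sum fun _ k => k) :=
  Finsupp.sum_add_index' (fun _ => rfl) (fun _ _ _ => rfl)

lemma pdiff_X_mul (i : Fin n) (p : MvPolynomial (Fin n) K) (γ : Fin n →₀ ℕ) :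
    pdiff γ (X i * p) = X i * pdiff γ p + (γ i : K) • pdiff (γ - Finsupp.single i 1) p := by
  set N := γ.sum fun _ k => k with hN
  clear_value N
  induction N using Nat.strong_induction_on generalizing γ p with
  | _ N ih =>
  rcases eq_or_ne γ 0 with rfl | hγ
  · simp [pdiff_zero]
  · -- pick j in support
    obtain ⟨j, hj⟩ := Finsupp.support_nonempty_iff.2 hγ
    have hj1 : Finsupp.single j 1 ≤ γ :=
      Finsupp.single_le_iff.2 (Nat.one_le_iff_ne_zero.2 (Finsupp.mem_support_iff.1 hj))
    set γ' := γ - Finsupp.single j 1 with hγ'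
    have hγeq : γ' + Finsupp.single j 1 = γ := tsub_add_cancel_of_le hj1
    have hlt : (γ'.sum fun _ k => k) < N := by
      rw [hN, ← hγeq, mdeg_add]
      simp [Finsupp.sum_single_index]
    have key : pdiff γ (X i * p) = pdiff γ' (pderiv j (X i * p)) := by
      rw [← hγeq, pdiff_add_single]
    rcases eq_or_ne j i with rfl | hji
    · -- j = i
      have hder : pderiv j (X j * p) = X j * pderiv j p + p := by
        rw [pderiv_mul, pderiv_X_self, one_mul, add_comm]
      have h3 : pdiff γ' (pderiv j p) = pdiff γ p := by rw [← pdiff_add_single, hγeq]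
      have hsub : γ - Finsupp.single j 1 = γ' := rfl
      rw [key, hder, map_add, ih _ hlt _ _ rfl, h3, hsub]
      have h2n : γ j = γ' j + 1 := by rw [← hγeq]; simp
      have h2 : (γ j : K) = (γ' j : K) + 1 := by exact_mod_cast congrArg Nat.cast h2n
      rw [h2]
      rcases eq_or_ne (γ' j) 0 with h0 | h0
      · rw [h0]
        simp [add_assoc]
      · have hle : Finsupp.single j 1 ≤ γ' := Finsupp.single_le_iff.2 (Nat.one_le_iff_ne_zero.2 h0)
        have h4 : pdiff (γ' - Finsupp.single j 1) (pderiv j p) = pdiff γ' p := by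
          rw [← pdiff_add_single, tsub_add_cancel_of_le hle]
        rw [h4, add_assoc, add_smul, one_smul]
    · -- j ≠ i
      have hder : pderiv j (X i * p) = X i * pderiv j p := by
        rw [pderiv_mul, pderiv_X_of_ne (Ne.symm hji), zero_mul, zero_add]
      have h3 : pdiff γ' (pderiv j p) = pdiff γ p := by rw [← pdiff_add_single, hγeq]
      rw [key, hder, ih _ hlt _ _ rfl, h3]
      have hidx : (γ' - Finsupp.single i 1) + Finsupp.single j 1 = γ - Finsupp.single i 1 := by
        rw [← hγeq]
        ext l
        simp only [Finsupp.add_apply, Finsupp.tsub_apply, Finsupp.single_apply]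
        rcases eq_or_ne i l with h1 | h1
        · rcases eq_or_ne j l with h2 | h2
          · exact absurd (h2.trans h1.symm) hji
          · simp [h1, h2]
        · rcases eq_or_ne j l with h2 | h2 <;> simp [h1, h2]
      have h1 : pdiff (γ' - Finsupp.single i 1) (pderiv j p)
          = pdiff (γ - Finsupp.single i 1) p := by
        rw [← pdiff_add_single, hidx]
      have h2 : (γ' i : K) = (γ i : K) := by
        have : γ' i = γ i := by
          rw [← hγeq]; simp [Finsupp.add_apply, Finsupp.single_apply, hji]
        exact_mod_cast congrArg Nat.cast this
      rw [h1, h2]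

end PdiffLemmas

end AuxLemmas

/-- Pairs `(j, β)` indexing the free parameters `μ_{α_j,β}` of the parametric
multiplication matrices: `β = α_k + e_i` lies outside `E` and `|α_k| < |α_j|`. -/
def UsedPair {n δ : ℕ} (α : Fin δ → (Fin n →₀ ℕ))
    (p : Fin δ × (Fin n →₀ ℕ)) : Prop :=
  ∃ (k : Fin δ) (i : Fin n), p.2 = α k + Finsupp.single i 1 ∧
    (∀ l, α l ≠ p.2) ∧ mdeg (α k) < mdeg (α p.1)

open Classical in
/-- The parametric multiplication matrix `Mᵢ(μ)` associated to the exponent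
set `E = {α₀,…,α_{δ−1}}`: entry `(j,k)` is `1` if `α_j = α_k + e_i`, `0` if
`α_k + e_i ∈ E` with `α_j ≠ α_k + e_i`, the fresh variable `μ_{α_j, α_k+e_i}`
if `|α_k| < |α_j|`, and `0` otherwise (strict triangular structure). -/
noncomputable def pmm {n δ : ℕ} (α : Fin δ → (Fin n →₀ ℕ)) (K : Type)
    [CommSemiring K] (i : Fin n) :
    Matrix (Fin δ) (Fin δ) (MvPolynomial (Subtype (UsedPair α)) K) :=
  Matrix.of fun j k =>
    if α j = α k + Finsupp.single i 1 then 1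
    else if h2 : ∃ l, α l = α k + Finsupp.single i 1 then 0
    else if h3 : mdeg (α k) < mdeg (α j) then
      MvPolynomial.X ⟨(j, α k + Finsupp.single i 1),
        k, i, rfl, fun l hl => h2 ⟨l, hl⟩, h3⟩
    else 0

/-- The parametric multiplication matrix viewed in `K[z,μ]`
(`z`-variables in the left summand, `μ`-variables in the right summand). -/
noncomputable def pmmT {n δ : ℕ} (α : Fin δ → (Fin n →₀ ℕ)) (K : Type)
    [CommSemiring K] (i : Fin n) :
    Matrix (Fin δ) (Fin δ)
      (MvPolynomial ((Fin n) ⊕ (Subtype (UsedPair α))) K) :=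
  (pmm α K i).map (rename Sum.inr)

/-- `M(μ)^γ = M₁(μ)^{γ₁}⋯Mₙ(μ)^{γₙ}` in the fixed order of the indices. -/
noncomputable def pmmPowT {n δ : ℕ} (α : Fin δ → (Fin n →₀ ℕ)) (K : Type)
    [CommSemiring K] (γ : Fin n →₀ ℕ) :
    Matrix (Fin δ) (Fin δ)
      (MvPolynomial ((Fin n) ⊕ (Subtype (UsedPair α))) K) :=
  (List.ofFn fun i : Fin n => (pmmT α K i) ^ (γ i)).prod

/-- The parametric normal form `N_{z,μ}(p) = Σ_γ (1/γ!)∂^γ(p)·M(μ)^γ[1]`,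
an element of `K[z,μ]^δ`; the sum is finite since `M(μ)^γ = 0` for `|γ| ≥ δ`,
so it is truncated at coordinatewise bound δ. -/
noncomputable def pnf {n δ : ℕ} [NeZero δ] (α : Fin δ → (Fin n →₀ ℕ))
    (K : Type) [Field K] (p : MvPolynomial (Fin n) K) :
    Fin δ → MvPolynomial ((Fin n) ⊕ (Subtype (UsedPair α))) K := fun j =>
  ∑ γ ∈ Finset.Iic (Finsupp.equivFunOnFinite.symm fun _ : Fin n => δ),
    (mfact γ : K)⁻¹ •
      (rename Sum.inl (pdiff γ p) *
        (pmmPowT α K γ).mulVec (Pi.single 0 1) j)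

/-- The commutator ideal `C`, generated by the entries of
`Mᵢ(μ)Mⱼ(μ) − Mⱼ(μ)Mᵢ(μ)`. -/
noncomputable def commIdeal {n δ : ℕ} (α : Fin δ → (Fin n →₀ ℕ)) (K : Type)
    [CommRing K] :
    Ideal (MvPolynomial ((Fin n) ⊕ (Subtype (UsedPair α))) K) :=
  Ideal.span {t | ∃ (i i' : Fin n) (j k : Fin δ),
    t = (pmmT α K i * pmmT α K i' - pmmT α K i' * pmmT α K i) j k}


section MatrixLemmas

lemma mdeg_add' {n : ℕ} (β γ : Fin n →₀ ℕ) : mdeg (β + γ) = mdeg β + mdeg γ :=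
  Finsupp.sum_add_index' (fun _ => rfl) (fun _ _ _ => rfl)

lemma mdeg_single {n : ℕ} (i : Fin n) : mdeg (Finsupp.single i 1) = 1 := by
  simp [mdeg]

lemma mdeg_eq_sum {n : ℕ} (γ : Fin n →₀ ℕ) : mdeg γ = ∑ l, γ l :=
  Finsupp.sum_fintype _ _ (fun _ => rfl)

variable {n δ : ℕ} (α : Fin δ → (Fin n →₀ ℕ)) (K : Type) [Field K]

lemma pmmT_apply_eq_zero (i : Fin n) {j k : Fin δ}
    (h : ¬ mdeg (α k) < mdeg (α j)) : pmmT α K i j k = 0 := by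
  classical
  have h1 : ¬ α j = α k + Finsupp.single i 1 := by
    intro he
    apply h
    rw [he, mdeg_add', mdeg_single]
    omega
  have hz : pmm α K i j k = 0 := by
    by_cases h2 : ∃ l, α l = α k + Finsupp.single i 1
    · simp [pmm, h1, h2]
    · simp [pmm, h1, h2, h]
  simp [pmmT, Matrix.map_apply, hz]

lemma matrix_prod_gain {R : Type*} [Semiring R] {δ : ℕ} (w : Fin δ → ℕ) :
    ∀ (L : List (Matrix (Fin δ) (Fin δ) R × ℕ)),
      (∀ x ∈ L, ∀ j k, x.1 j k ≠ 0 → w k + x.2 ≤ w j) →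
      ∀ j k, (L.map Prod.fst).prod j k ≠ 0 → w k + (L.map Prod.snd).sum ≤ w j := by
  intro L
  induction L with
  | nil =>
    intro _ j k h
    rcases eq_or_ne j k with rfl | hne
    · simp
    · exact absurd (Matrix.one_apply_ne hne) (by simpa using h)
  | cons x L ih =>
    intro hL j k h
    simp only [List.map_cons, List.prod_cons, List.sum_cons] at h ⊢
    rw [Matrix.mul_apply] at h
    obtain ⟨l, -, hl⟩ := Finset.exists_ne_zero_of_sum_ne_zero h
    have h1 : x.1 j l ≠ 0 := left_ne_zero_of_mul hl
    have h2 : (L.map Prod.fst).prod l k ≠ 0 := right_ne_zero_of_mul hl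
    have e1 := hL x List.mem_cons_self j l h1
    have e2 := ih (fun y hy => hL y (List.mem_cons_of_mem _ hy)) l k h2
    omega

lemma pmmT_pow_gain (i : Fin n) (m : ℕ) (j k : Fin δ)
    (h : ((pmmT α K i) ^ m) j k ≠ 0) : mdeg (α k) + m ≤ mdeg (α j) := by
  have key := matrix_prod_gain (fun j => mdeg (α j))
    (List.replicate m (pmmT α K i, 1)) ?_ j k ?_
  · simpa [List.map_replicate, List.sum_replicate, smul_eq_mul] using key
  · intro x hx j' k' hx0
    rw [List.eq_of_mem_replicate hx] at hx0 ⊢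
    by_contra hc
    exact hx0 (pmmT_apply_eq_zero α K i fun h => hc h)
  · simpa [List.map_replicate, List.prod_replicate] using h

lemma mdeg_lt_delta (hconn : ∀ j, α j ≠ 0 → ∃ (k : Fin δ) (i : Fin n),
      α j = α k + Finsupp.single i 1) (j : Fin δ) : mdeg (α j) < δ := by
  have desc : ∀ d : ℕ, ∀ j : Fin δ, mdeg (α j) = d → ∀ m ≤ d, ∃ k, mdeg (α k) = m := by
    intro d
    induction d using Nat.strong_induction_on with
    | _ d ih =>
      intro j hj m hm
      rcases eq_or_ne m d with rfl | hmd
      · exact ⟨j, hj⟩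
      · have hd : 0 < d := by omega
        have hne : α j ≠ 0 := by
          intro h0
          rw [h0] at hj
          simp [mdeg] at hj
          omega
        obtain ⟨k, i, hk⟩ := hconn j hne
        have hmk : mdeg (α k) = d - 1 := by
          have := hj
          rw [hk, mdeg_add', mdeg_single] at this
          omega
        exact ih (d - 1) (by omega) k hmk m (by omega)
  set d := mdeg (α j) with hd
  have hch : ∀ m : Fin (d + 1), ∃ k, mdeg (α k) = (m : ℕ) :=
    fun m => desc d j rfl m (by omega)
  choose f hf using hch
  have hinj : Function.Injective f := by
    intro a b hab
    have : (a : ℕ) = (b : ℕ) := by rw [← hf a, ← hf b, hab]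
    exact Fin.ext this
  have := Fintype.card_le_of_injective f hinj
  simpa using this

lemma pmmPowT_eq_zero (hconn : ∀ j, α j ≠ 0 → ∃ (k : Fin δ) (i : Fin n),
      α j = α k + Finsupp.single i 1) (γ : Fin n →₀ ℕ) (hγ : δ ≤ mdeg γ) :
    pmmPowT α K γ = 0 := by
  refine Matrix.ext fun j k => ?_
  rw [Matrix.zero_apply]
  by_contra hc
  have key := matrix_prod_gain (fun j => mdeg (α j))
    (List.ofFn fun l => ((pmmT α K l) ^ γ l, γ l)) ?_ j k ?_
  · have h1 : ((List.ofFn fun l => ((pmmT α K l) ^ γ l, γ l)).map Prod.snd).sum = mdeg γ := by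
      simp [List.map_ofFn, List.sum_ofFn, mdeg_eq_sum]
    rw [h1] at key
    have key' : mdeg (α k) + mdeg γ ≤ mdeg (α j) := key
    have := mdeg_lt_delta α hconn j
    omega
  · intro x hx j' k' hx0
    rw [List.mem_ofFn] at hx
    obtain ⟨l, rfl⟩ := hx
    exact pmmT_pow_gain α K l (γ l) j' k' hx0
  · have h2 : ((List.ofFn fun l => ((pmmT α K l) ^ γ l, γ l)).map Prod.fst).prod
        = pmmPowT α K γ := by
      rw [List.map_ofFn]
      rfl
    rw [h2]
    exact hc

lemma pmmPowT_succ_sub_mem (i : Fin n) (β : Fin n →₀ ℕ) (j k : Fin δ) :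
    (pmmPowT α K (β + Finsupp.single i 1) - pmmT α K i * pmmPowT α K β) j k
      ∈ commIdeal α K := by
  classical
  set q := Ideal.Quotient.mk (commIdeal α K) with hq
  set Q := RingHom.mapMatrix (m := Fin δ) q with hQ
  have hcomm : ∀ l l', Commute (Q (pmmT α K l)) (Q (pmmT α K l')) := by
    intro l l'
    show _ = _
    rw [← map_mul, ← map_mul]
    refine Matrix.ext fun j' k' => ?_
    simp only [hQ, RingHom.mapMatrix_apply, Matrix.map_apply, hq]
    rw [Ideal.Quotient.eq]
    exact Ideal.subset_span ⟨l, l', j', k', by simp [Matrix.sub_apply]⟩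
  have hQpow : ∀ γ : Fin n →₀ ℕ,
      Q (pmmPowT α K γ) = (List.ofFn fun l => (Q (pmmT α K l)) ^ γ l).prod := by
    intro γ
    rw [pmmPowT, map_list_prod, List.map_ofFn]
    exact congrArg (fun f => (List.ofFn f).prod) (funext fun l => map_pow Q _ _)
  have hmain : Q (pmmPowT α K (β + Finsupp.single i 1))
      = Q (pmmT α K i * pmmPowT α K β) := by
    rw [map_mul, hQpow, hQpow, add_comm β,
      prodPow_add _ hcomm (Finsupp.single i 1) β,
      prodPow_single (fun l => Q (pmmT α K l)) i]
  have hentry : q ((pmmPowT α K (β + Finsupp.single i 1)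
      - pmmT α K i * pmmPowT α K β) j k) = 0 := by
    rw [Matrix.sub_apply, map_sub]
    have h' : Q (pmmPowT α K (β + Finsupp.single i 1)) j k
        = Q (pmmT α K i * pmmPowT α K β) j k := by rw [hmain]
    simp only [hQ, RingHom.mapMatrix_apply, Matrix.map_apply] at h'
    rw [h', sub_self]
  exact Ideal.Quotient.eq_zero_iff_mem.mp hentry

end MatrixLemmas



lemma mfact_pos {n : ℕ} (β : Fin n →₀ ℕ) : 0 < mfact β :=
  Finset.prod_pos fun _ _ => Nat.factorial_pos _

lemma mfact_add_single {n : ℕ} (β : Fin n →₀ ℕ) (i : Fin n) :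
    mfact (β + Finsupp.single i 1) = mfact β * (β i + 1) := by
  unfold mfact
  rw [← Finset.prod_erase_mul _ _ (Finset.mem_univ i),
    ← Finset.prod_erase_mul _ _ (Finset.mem_univ i)]
  have h1 : ∏ l ∈ Finset.univ.erase i, (((β + Finsupp.single i 1) : Fin n →₀ ℕ) l).factorial
      = ∏ l ∈ Finset.univ.erase i, (β l).factorial := by
    refine Finset.prod_congr rfl fun l hl => ?_
    have hil : ¬ i = l := fun h => (Finset.mem_erase.mp hl).1 h.symm
    rw [Finsupp.add_apply, Finsupp.single_apply, if_neg hil, add_zero]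
  have h2 : ((β + Finsupp.single i 1) : Fin n →₀ ℕ) i = β i + 1 := by
    rw [Finsupp.add_apply, Finsupp.single_apply, if_pos rfl]
  rw [h1, h2, Nat.factorial_succ]
  ring

/-- The correction map `O_{i,μ}`. -/
noncomputable def Omap {n δ : ℕ} [NeZero δ] (α : Fin δ → (Fin n →₀ ℕ)) (K : Type)
    [Field K] (i : Fin n) :
    MvPolynomial (Fin n) K →ₗ[K]
      (Fin δ → MvPolynomial ((Fin n) ⊕ (Subtype (UsedPair α))) K) where
  toFun p := fun j =>
    ∑ β ∈ Finset.Iic (Finsupp.equivFunOnFinite.symm fun _ : Fin n => δ),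
      (mfact β : K)⁻¹ • (rename Sum.inl (pdiff β p) *
        ((pmmPowT α K (β + Finsupp.single i 1)
          - pmmT α K i * pmmPowT α K β).mulVec (Pi.single 0 1) j))
  map_add' p q := by
    funext j
    simp only [map_add, add_mul, smul_add, Pi.add_apply]
    rw [← Finset.sum_add_distrib]
  map_smul' c p := by
    funext j
    simp only [map_smul, RingHom.id_apply, Pi.smul_apply, smul_mul_assoc, Finset.smul_sum]
    exact Finset.sum_congr rfl fun β _ => smul_comm _ _ _


/-- product rule for the parametric normal form.  For every `i`,
`N_{z,μ}(xᵢ·p) = zᵢ·N_{z,μ}(p) + Mᵢ(μ)·N_{z,μ}(p) + O_{i,μ}(p)` where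
`O_{i,μ}` is a `K`-linear map whose values have all entries in the
commutator ideal `C`. -/
theorem pnf_product_rule {n δ : ℕ} [NeZero δ] {K : Type} [Field K] [CharZero K]
    (α : Fin δ → (Fin n →₀ ℕ))
    (hα0 : α 0 = 0)
    (hconn : ∀ j, α j ≠ 0 → ∃ (k : Fin δ) (i : Fin n),
      α j = α k + Finsupp.single i 1) :
    ∀ i : Fin n,
      ∃ O : MvPolynomial (Fin n) K →ₗ[K]
          (Fin δ → MvPolynomial ((Fin n) ⊕ (Subtype (UsedPair α))) K),
        (∀ p j, O p j ∈ commIdeal α K) ∧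
        (∀ p, pnf α K (X i * p) =
          (fun j => X (Sum.inl i) * pnf α K p j)
            + (pmmT α K i).mulVec (pnf α K p) + O p) := by
  classical
  intro i
  refine ⟨Omap α K i, ?_, ?_⟩
  · intro p j
    refine Ideal.sum_mem _ fun β _ => ?_
    refine Submodule.smul_of_tower_mem _ _ ?_
    refine Ideal.mul_mem_left _ _ ?_
    show (pmmPowT α K (β + Finsupp.single i 1) - pmmT α K i * pmmPowT α K β).mulVec
        (Pi.single 0 1) j ∈ commIdeal α K
    simp only [Matrix.mulVec, dotProduct]
    refine Ideal.sum_mem _ fun k _ => ?_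
    exact Ideal.mul_mem_right _ _ (pmmPowT_succ_sub_mem α K i β j k)
  · intro p
    funext j
    have hδ : 0 < δ := Nat.pos_of_ne_zero (NeZero.ne δ)
    have hpnf : ∀ (q : MvPolynomial (Fin n) K) (j' : Fin δ), pnf α K q j'
        = ∑ γ ∈ Finset.Iic (Finsupp.equivFunOnFinite.symm fun _ : Fin n => δ),
            (mfact γ : K)⁻¹ • (rename Sum.inl (pdiff γ q) *
              (pmmPowT α K γ).mulVec (Pi.single 0 1) j') :=
      fun q j' => rfl
    set c : Fin n →₀ ℕ := Finsupp.equivFunOnFinite.symm fun _ : Fin n => δ with hcdef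
    have hcl : ∀ l, c l = δ := fun _ => rfl
    set e0 : Fin δ → MvPolynomial ((Fin n) ⊕ (Subtype (UsedPair α))) K :=
      Pi.single 0 1 with he0
    -- the two families of summands
    set f : (Fin n →₀ ℕ) → MvPolynomial ((Fin n) ⊕ (Subtype (UsedPair α))) K :=
      fun β => (mfact β : K)⁻¹ • (rename Sum.inl (pdiff β p) *
        (pmmPowT α K (β + Finsupp.single i 1)).mulVec e0 j) with hf
    set g : (Fin n →₀ ℕ) → MvPolynomial ((Fin n) ⊕ (Subtype (UsedPair α))) K :=
      fun γ => ((γ i : K) * (mfact γ : K)⁻¹) •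
        (rename Sum.inl (pdiff (γ - Finsupp.single i 1) p) *
          (pmmPowT α K γ).mulVec e0 j) with hg
    have step1 : pnf α K (X i * p) j
        = (∑ γ ∈ Finset.Iic c, X (Sum.inl i) * ((mfact γ : K)⁻¹ •
            (rename Sum.inl (pdiff γ p) * (pmmPowT α K γ).mulVec e0 j)))
          + ∑ γ ∈ Finset.Iic c, g γ := by
      rw [hpnf, ← Finset.sum_add_distrib]
      refine Finset.sum_congr rfl fun γ _ => ?_
      rw [hg, pdiff_X_mul, map_add, map_mul, rename_X, map_smul, add_mul, smul_add]
      congr 1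
      · rw [mul_assoc, mul_smul_comm]
      · rw [smul_mul_assoc, smul_smul, mul_comm ((mfact γ : K)⁻¹)]
    have hfirst : (∑ γ ∈ Finset.Iic c, X (Sum.inl i) * ((mfact γ : K)⁻¹ •
          (rename Sum.inl (pdiff γ p) * (pmmPowT α K γ).mulVec e0 j)))
        = X (Sum.inl i) * pnf α K p j := by
      rw [hpnf, Finset.mul_sum]
    -- second sum: reindexing
    have hg0 : ∀ γ ∈ Finset.Iic c, g γ ≠ 0 → γ i ≠ 0 := by
      intro γ _ hne h0
      exact hne (by rw [hg]; simp [h0])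
    have hf0 : ∀ β ∈ Finset.Iic c, f β ≠ 0 → β i ≠ δ := by
      intro β _ hne h0
      apply hne
      have hm : δ ≤ mdeg (β + Finsupp.single i 1) := by
        rw [mdeg_add', mdeg_single, mdeg_eq_sum]
        have hle : β i ≤ ∑ l, β l := Finset.single_le_sum (f := fun l => β l)
          (fun _ _ => Nat.zero_le _) (Finset.mem_univ i)
        omega
      rw [hf]
      simp only [pmmPowT_eq_zero α K hconn _ hm, Matrix.zero_mulVec]
      simp
    have hbij : ∑ β ∈ (Finset.Iic c).filter (fun β => β i ≠ δ), f β
        = ∑ γ ∈ (Finset.Iic c).filter (fun γ => γ i ≠ 0), g γ := by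
      refine Finset.sum_bij' (fun β _ => β + Finsupp.single i 1)
        (fun γ _ => γ - Finsupp.single i 1) ?_ ?_ ?_ ?_ ?_
      · intro β hβ
        simp only [Finset.mem_filter, Finset.mem_Iic] at hβ ⊢
        constructor
        · rw [Finsupp.le_def]
          intro l
          have h1 : β l ≤ δ := by
            have := Finsupp.le_def.mp hβ.1 l
            simpa [hcl] using this
          rw [Finsupp.add_apply, Finsupp.single_apply, hcl]
          by_cases hil : i = l
          · subst hil
            have h2 : β i ≠ δ := hβ.2
            have h5 : β i + 1 ≤ δ := by omega
            simpa using h5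
          · simp [hil, h1]
        · rw [Finsupp.add_apply, Finsupp.single_apply, if_pos rfl]
          simp
      · intro γ hγ
        simp only [Finset.mem_filter, Finset.mem_Iic] at hγ ⊢
        constructor
        · exact le_trans tsub_le_self hγ.1
        · have h1 : γ i ≤ δ := by
            have := Finsupp.le_def.mp hγ.1 i
            simpa [hcl] using this
          have h2 : ((γ - Finsupp.single i 1) : Fin n →₀ ℕ) i = γ i - 1 := by
            simp
          rw [h2]
          have h3 := hγ.2
          omega
      · intro β _
        exact add_tsub_cancel_right β (Finsupp.single i 1)
      · intro γ hγ
        simp only [Finset.mem_filter, Finset.mem_Iic] at hγ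
        have h1 : Finsupp.single i 1 ≤ γ :=
          Finsupp.single_le_iff.2 (Nat.one_le_iff_ne_zero.2 hγ.2)
        exact tsub_add_cancel_of_le h1
      · intro β _
        have hidx : (β + Finsupp.single i 1) - Finsupp.single i 1 = β :=
          add_tsub_cancel_right β (Finsupp.single i 1)
        have happ : ((β + Finsupp.single i 1) : Fin n →₀ ℕ) i = β i + 1 := by
          rw [Finsupp.add_apply, Finsupp.single_apply, if_pos rfl]
        have hcoef : ((β i + 1 : ℕ) : K) * (mfact (β + Finsupp.single i 1) : K)⁻¹
            = (mfact β : K)⁻¹ := by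
          rw [mfact_add_single]
          push_cast
          rw [mul_inv, mul_comm ((mfact β : K)⁻¹), ← mul_assoc,
            mul_inv_cancel₀ (Nat.cast_add_one_ne_zero (β i)), one_mul]
        rw [hf, hg]
        simp only [hidx, happ, hcoef]
    have hsecond : (∑ γ ∈ Finset.Iic c, g γ) = ∑ β ∈ Finset.Iic c, f β := by
      rw [← Finset.sum_filter_of_ne hg0, ← Finset.sum_filter_of_ne hf0, hbij]
    -- decompose f into M_i-part plus commutator part
    have hsplit : ∀ β : Fin n →₀ ℕ, (pmmPowT α K (β + Finsupp.single i 1)).mulVec e0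
        = (pmmT α K i * pmmPowT α K β).mulVec e0
          + ((pmmPowT α K (β + Finsupp.single i 1)
              - pmmT α K i * pmmPowT α K β)).mulVec e0 := by
      intro β
      rw [← Matrix.add_mulVec, add_comm (pmmT α K i * pmmPowT α K β), sub_add_cancel]
    have hmv : ∀ β : Fin n →₀ ℕ, (pmmT α K i * pmmPowT α K β).mulVec e0 j
        = ∑ k, pmmT α K i j k * (pmmPowT α K β).mulVec e0 k := by
      intro β
      rw [← Matrix.mulVec_mulVec]
      rfl
    have hRHS : (pmmT α K i).mulVec (pnf α K p) j
        = ∑ k, pmmT α K i j k * pnf α K p k := rfl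
    have hfinal : ∑ β ∈ Finset.Iic c, f β
        = (pmmT α K i).mulVec (pnf α K p) j + Omap α K i p j := by
      have e1 : ∑ β ∈ Finset.Iic c, f β
          = (∑ β ∈ Finset.Iic c, (mfact β : K)⁻¹ • (rename Sum.inl (pdiff β p) *
              (pmmT α K i * pmmPowT α K β).mulVec e0 j))
            + ∑ β ∈ Finset.Iic c, (mfact β : K)⁻¹ • (rename Sum.inl (pdiff β p) *
              ((pmmPowT α K (β + Finsupp.single i 1)
                - pmmT α K i * pmmPowT α K β)).mulVec e0 j) := by
        rw [← Finset.sum_add_distrib]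
        refine Finset.sum_congr rfl fun β _ => ?_
        rw [hf]
        simp only [hsplit β, Pi.add_apply, mul_add, smul_add]
      have e2 : (∑ β ∈ Finset.Iic c, (mfact β : K)⁻¹ • (rename Sum.inl (pdiff β p) *
            (pmmT α K i * pmmPowT α K β).mulVec e0 j))
          = (pmmT α K i).mulVec (pnf α K p) j := by
        rw [hRHS]
        calc ∑ β ∈ Finset.Iic c, (mfact β : K)⁻¹ • (rename Sum.inl (pdiff β p) *
              (pmmT α K i * pmmPowT α K β).mulVec e0 j)
            = ∑ β ∈ Finset.Iic c, ∑ k, pmmT α K i j k *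
                ((mfact β : K)⁻¹ • (rename Sum.inl (pdiff β p) *
                  (pmmPowT α K β).mulVec e0 k)) := by
              refine Finset.sum_congr rfl fun β _ => ?_
              rw [hmv β, Finset.mul_sum, Finset.smul_sum]
              refine Finset.sum_congr rfl fun k _ => ?_
              rw [mul_left_comm]
              exact (mul_smul_comm _ _ _).symm
          _ = ∑ k, ∑ β ∈ Finset.Iic c, pmmT α K i j k *
                ((mfact β : K)⁻¹ • (rename Sum.inl (pdiff β p) *
                  (pmmPowT α K β).mulVec e0 k)) := Finset.sum_comm
          _ = ∑ k, pmmT α K i j k * pnf α K p k := by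
              refine Finset.sum_congr rfl fun k _ => ?_
              rw [← Finset.mul_sum, ← hpnf]
      have e3 : (∑ β ∈ Finset.Iic c, (mfact β : K)⁻¹ • (rename Sum.inl (pdiff β p) *
            ((pmmPowT α K (β + Finsupp.single i 1)
              - pmmT α K i * pmmPowT α K β)).mulVec e0 j))
          = Omap α K i p j := rfl
      rw [e1, e2, e3]
    rw [step1, hfirst, hsecond, hfinal]
    simp [Pi.add_apply, add_assoc]

end
end

section
/- Let f₁,…,f_N ∈ K[x] (K ⊆ ℂ) with isolated root ξ ∈ ℂⁿ, Q the 𝔪_ξ-primary component, B a basis of ℂ[x]/Q as in the orthogonal primal-dual lemma with exponent set E, and Mᵢ(μ) the parametric multiplication matrices for E. Then the ideal of ℂ[μ] generated by all entries of N_{ξ,μ}(f_k) for k = 1,…,N together with all entries of the commutators Mᵢ(μ)Mⱼ(μ) − Mⱼ(μ)Mᵢ(μ) equals the maximal ideal generated by μ_{α,β} − ν_{α,β} for (α,β) ∈ E×∂(E), where ν_{α,β} are the coefficients of the dual basis of Q^⊥. -/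
open MvPolynomial

noncomputable section

/-- The parametric normal form specialized at `z = ξ`:
`N_{ξ,μ}(p) = Σ_γ (1/γ!)∂^γp(ξ)·M(μ)^γ[1] ∈ ℂ[μ]^δ`. -/
noncomputable def pnfXi {n δ : ℕ} [NeZero δ] (α : Fin δ → (Fin n →₀ ℕ))
    (ξ : Fin n → ℂ) (p : MvPolynomial (Fin n) ℂ) :
    Fin δ → MvPolynomial (Subtype (UsedPair α)) ℂ := fun j =>
  ∑ γ ∈ Finset.Iic (Finsupp.equivFunOnFinite.symm fun _ : Fin n => δ),
    (mfact γ : ℂ)⁻¹ •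
      (C (eval ξ (pdiff γ p)) *
        ((List.ofFn fun i : Fin n => (pmm α ℂ i) ^ (γ i)).prod.mulVec
          (Pi.single 0 1) j))

lemma ofFn_prod_pow_add {M : Type*} [Monoid M] {n : ℕ} (A : Fin n → M)
    (h : ∀ i j, Commute (A i) (A j)) (σ τ : Fin n → ℕ) :
    (List.ofFn fun i => A i ^ (σ i + τ i)).prod
      = (List.ofFn fun i => A i ^ σ i).prod * (List.ofFn fun i => A i ^ τ i).prod := by
  induction n with
  | zero => simp
  | succ m ih =>
    simp only [List.ofFn_succ, List.prod_cons]
    rw [ih (fun i => A i.succ) (fun i j => h _ _) (fun i => σ i.succ) (fun i => τ i.succ)]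
    have hc : Commute (A 0 ^ τ 0) ((List.ofFn fun i : Fin m => A i.succ ^ σ i.succ).prod) := by
      apply Commute.list_prod_right
      intro y hy
      rw [List.mem_ofFn] at hy
      obtain ⟨i, rfl⟩ := hy
      exact (h 0 i.succ).pow_pow _ _
    rw [pow_add]
    rw [mul_assoc, mul_assoc, ← mul_assoc (A 0 ^ τ 0), hc.eq, mul_assoc]

lemma ofFn_prod_pow_single {M : Type*} [Monoid M] {n : ℕ} (A : Fin n → M) (i : Fin n) (m : ℕ) :
    (List.ofFn fun l => A l ^ (Finsupp.single i m) l).prod = A i ^ m := by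
  induction n with
  | zero => exact absurd i.2 (by simp)
  | succ k ih =>
    simp only [List.ofFn_succ, List.prod_cons]
    rcases Fin.eq_zero_or_eq_succ i with rfl | ⟨j, rfl⟩
    · rw [Finsupp.single_eq_same]
      have : ∀ l : Fin k, (Finsupp.single (0 : Fin (k+1)) m) l.succ = 0 := by
        intro l; exact Finsupp.single_eq_of_ne' (Fin.succ_ne_zero l).symm
      have h1 : (List.ofFn fun l : Fin k => A l.succ ^ (Finsupp.single (0:Fin (k+1)) m) l.succ).prod = 1 := by
        apply List.prod_eq_one
        intro x hx
        rw [List.mem_ofFn] at hx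
        obtain ⟨l, rfl⟩ := hx
        simp only [this l, pow_zero]
      rw [h1, mul_one]
    · rw [show ((Finsupp.single j.succ m) (0:Fin (k+1))) = 0 from
        Finsupp.single_eq_of_ne' (Fin.succ_ne_zero j), pow_zero, one_mul]
      have : ∀ l : Fin k, (Finsupp.single j.succ m) l.succ = (Finsupp.single j m) l := by
        intro l
        rcases eq_or_ne l j with rfl | hne
        · simp
        · have h1 : j.succ ≠ l.succ := fun hh => hne (Fin.succ_injective _ hh).symm
          rw [Finsupp.single_eq_of_ne' h1, Finsupp.single_eq_of_ne' (Ne.symm hne)]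
      have he : (fun l : Fin k => A l.succ ^ (Finsupp.single j.succ m) l.succ)
          = (fun l : Fin k => A l.succ ^ (Finsupp.single j m) l) :=
        funext fun w => by rw [this w]
      rw [he]
      exact ih (fun l => A l.succ) j

namespace Aux

variable {n : ℕ} {K : Type} [CommSemiring K]

lemma pderiv_comm (i j : Fin n) (p : MvPolynomial (Fin n) K) :
    pderiv i (pderiv j p) = pderiv j (pderiv i p) := by
  induction p using MvPolynomial.induction_on' with
  | monomial s a =>
    rcases eq_or_ne i j with rfl | hij
    · rfl
    · simp only [pderiv_monomial]
      rw [tsub_tsub, tsub_tsub, add_comm (Finsupp.single j 1)]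
      have h1 : ((s - Finsupp.single j 1 : Fin n →₀ ℕ)) i = s i := by
        rw [Finsupp.tsub_apply, Finsupp.single_eq_of_ne' (Ne.symm hij), Nat.sub_zero]
      have h2 : ((s - Finsupp.single i 1 : Fin n →₀ ℕ)) j = s j := by
        rw [Finsupp.tsub_apply, Finsupp.single_eq_of_ne' hij, Nat.sub_zero]
      rw [h1, h2]
      congr 1
      ring
  | add p q hp hq => simp only [map_add, hp, hq]

lemma commute_pderiv (i j : Fin n) :
    Commute ((pderiv i : Derivation K _ _).toLinearMap)
      ((pderiv j : Derivation K _ _).toLinearMap) :=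
  LinearMap.ext fun p => pderiv_comm i j p

lemma pdiff_add (σ τ : Fin n →₀ ℕ) :
    (pdiff (σ + τ) : Module.End K (MvPolynomial (Fin n) K)) = pdiff σ * pdiff τ := by
  unfold pdiff
  simp only [Finsupp.add_apply]
  exact ofFn_prod_pow_add _ commute_pderiv _ _

lemma pdiff_single (i : Fin n) (m : ℕ) :
    (pdiff (Finsupp.single i m) : Module.End K (MvPolynomial (Fin n) K))
      = ((pderiv i : Derivation K _ _).toLinearMap) ^ m :=
  ofFn_prod_pow_single _ i m

lemma pdiff_zero' : (pdiff (0 : Fin n →₀ ℕ) : Module.End K (MvPolynomial (Fin n) K)) = 1 := by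
  unfold pdiff
  apply List.prod_eq_one
  intro x hx
  rw [List.mem_ofFn] at hx
  obtain ⟨l, rfl⟩ := hx
  simp

lemma pderiv_pow_monomial (i : Fin n) (m : ℕ) (s : Fin n →₀ ℕ) (a : K) :
    (((pderiv i : Derivation K _ _).toLinearMap) ^ m) (monomial s a)
      = monomial (s - Finsupp.single i m) (a * (s i).descFactorial m) := by
  induction m with
  | zero => simp
  | succ m ih =>
    rw [pow_succ', Module.End.mul_apply, ih]
    have hpd : ((pderiv i : Derivation K _ _).toLinearMap)
          (monomial (s - Finsupp.single i m) (a * (s i).descFactorial m))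
        = monomial (s - Finsupp.single i m - Finsupp.single i 1)
            ((a * (s i).descFactorial m) * ((s - Finsupp.single i m : Fin n →₀ ℕ) i)) :=
      pderiv_monomial
    rw [hpd]
    have hidx : s - Finsupp.single i m - Finsupp.single i 1 = s - Finsupp.single i (m + 1) := by
      rw [tsub_tsub, ← Finsupp.single_add]
    have happ : ((s - Finsupp.single i m : Fin n →₀ ℕ)) i = s i - m := by
      rw [Finsupp.tsub_apply, Finsupp.single_eq_same]
    rw [hidx, happ, Nat.descFactorial_succ]
    rcases Nat.le_total m (s i) with hle | hle
    · push_cast [Nat.cast_sub hle]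
      ring
    · have h1 : s i - m = 0 := Nat.sub_eq_zero_of_le hle
      have h2 : (s i).descFactorial m = 0 ∨ m = s i := by
        rcases Nat.lt_or_ge (s i) m with h | h
        · exact Or.inl (Nat.descFactorial_eq_zero_iff_lt.mpr h)
        · exact Or.inr (Nat.le_antisymm h hle)
      rcases h2 with h2 | h2
      · rw [h1, h2]
        push_cast
        ring
      · subst h2
        rw [h1]
        push_cast
        ring

lemma pdiff_monomial (σ s : Fin n →₀ ℕ) (a : K) :
    pdiff σ (monomial s a)
      = monomial (s - σ) (a * ∏ i, ((s i).descFactorial (σ i) : K)) := by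
  induction σ using Finsupp.induction with
  | zero => simp [pdiff_zero']
  | single_add i m τ hiτ hm ih =>
    rw [pdiff_add, Module.End.mul_apply, ih, pdiff_single, pderiv_pow_monomial]
    have hτi : τ i = 0 := Finsupp.notMem_support_iff.mp hiτ
    have h1 : ((s - τ : Fin n →₀ ℕ)) i = s i := by
      rw [Finsupp.tsub_apply, hτi, Nat.sub_zero]
    have h2 : s - τ - Finsupp.single i m = s - (Finsupp.single i m + τ) := by
      rw [tsub_tsub, add_comm]
    rw [h1, h2]
    congr 1
    have h3 : ∀ l, (((s l).descFactorial (((Finsupp.single i m + τ) : Fin n →₀ ℕ) l) : K))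
        = (if l = i then ((s i).descFactorial m : K) else 1) * ((s l).descFactorial (τ l) : K) := by
      intro l
      rcases eq_or_ne l i with rfl | hne
      · rw [Finsupp.add_apply, Finsupp.single_eq_same, hτi, Nat.add_zero, if_pos rfl,
          Nat.descFactorial_zero, Nat.cast_one, mul_one]
      · rw [Finsupp.add_apply, Finsupp.single_eq_of_ne' (Ne.symm hne), if_neg hne,
          Nat.zero_add, one_mul]
    rw [Finset.prod_congr rfl (fun l _ => h3 l), Finset.prod_mul_distrib,
      Finset.prod_ite_eq' Finset.univ i (fun _ => ((s i).descFactorial m : K)),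
      if_pos (Finset.mem_univ i)]
    ring


section Shift
variable {n : ℕ} (ξ : Fin n → ℂ)

def sh : MvPolynomial (Fin n) ℂ →ₐ[ℂ] MvPolynomial (Fin n) ℂ :=
  aeval fun i => X i - C (ξ i)

def shinv : MvPolynomial (Fin n) ℂ →ₐ[ℂ] MvPolynomial (Fin n) ℂ :=
  aeval fun i => X i + C (ξ i)

lemma sh_C (c : ℂ) : sh ξ (C c) = C c := by
  rw [sh, aeval_C, MvPolynomial.algebraMap_eq]

lemma sh_X (i : Fin n) : sh ξ (X i) = X i - C (ξ i) := by rw [sh, aeval_X]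

lemma sh_shinv (p : MvPolynomial (Fin n) ℂ) : sh ξ (shinv ξ p) = p := by
  induction p using MvPolynomial.induction_on with
  | C a => rw [shinv, aeval_C, MvPolynomial.algebraMap_eq, sh_C]
  | add p q hp hq => rw [map_add, map_add, hp, hq]
  | mul_X p i hp =>
    rw [map_mul, map_mul, hp]
    refine congrArg (p * ·) ?_
    rw [shinv, aeval_X, map_add, sh_X, sh_C]
    ring

lemma xpow_zero' : xpow ξ 0 = 1 := by simp [xpow]

lemma mfact_zero' : mfact (0 : Fin n →₀ ℕ) = 1 := by simp [mfact]

lemma mfact_pos (β : Fin n →₀ ℕ) : 0 < mfact β :=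
  Finset.prod_pos fun i _ => Nat.factorial_pos _

lemma mfact_cast_ne_zero (β : Fin n →₀ ℕ) : (mfact β : ℂ) ≠ 0 :=
  Nat.cast_ne_zero.mpr (mfact_pos β).ne'

lemma mfact_add_single (β : Fin n →₀ ℕ) (i : Fin n) :
    mfact (β + Finsupp.single i 1) = (β i + 1) * mfact β := by
  unfold mfact
  have h3 : ∀ l, (((β + Finsupp.single i 1 : Fin n →₀ ℕ)) l).factorial
      = (if l = i then (β i + 1) else 1) * (β l).factorial := by
    intro l
    rcases eq_or_ne l i with rfl | hne
    · rw [Finsupp.add_apply, Finsupp.single_eq_same, if_pos rfl, Nat.factorial_succ]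
    · rw [Finsupp.add_apply, Finsupp.single_eq_of_ne' (Ne.symm hne), if_neg hne,
        Nat.add_zero, Nat.one_mul]
  rw [Finset.prod_congr rfl (fun l _ => h3 l), Finset.prod_mul_distrib,
    Finset.prod_ite_eq' Finset.univ i (fun _ => β i + 1), if_pos (Finset.mem_univ i)]

lemma xpow_add_single (β : Fin n →₀ ℕ) (i : Fin n) :
    xpow ξ (β + Finsupp.single i 1) = (X i - C (ξ i)) * xpow ξ β := by
  unfold xpow
  have h3 : ∀ l, (X l - C (ξ l)) ^ (((β + Finsupp.single i 1 : Fin n →₀ ℕ)) l)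
      = (if l = i then (X i - C (ξ i)) else 1) * (X l - C (ξ l)) ^ (β l) := by
    intro l
    rcases eq_or_ne l i with rfl | hne
    · rw [Finsupp.add_apply, Finsupp.single_eq_same, if_pos rfl, pow_succ]
      ring
    · rw [Finsupp.add_apply, Finsupp.single_eq_of_ne' (Ne.symm hne), if_neg hne,
        Nat.add_zero, one_mul]
  rw [Finset.prod_congr rfl (fun l _ => h3 l), Finset.prod_mul_distrib,
    Finset.prod_ite_eq' Finset.univ i (fun _ => X i - C (ξ i)), if_pos (Finset.mem_univ i)]

lemma sh_monomial (β : Fin n →₀ ℕ) (c : ℂ) :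
    sh ξ (monomial β c) = C c * xpow ξ β := by
  rw [sh, aeval_monomial, MvPolynomial.algebraMap_eq]
  congr 1
  rw [Finsupp.prod_fintype]
  · rfl
  · intro i; exact pow_zero _

lemma pderiv_sh (i : Fin n) (p : MvPolynomial (Fin n) ℂ) :
    pderiv i (sh ξ p) = sh ξ (pderiv i p) := by
  induction p using MvPolynomial.induction_on with
  | C a => rw [sh_C, pderiv_C, map_zero]
  | add p q hp hq => rw [map_add, map_add, map_add, hp, hq, map_add]
  | mul_X p j hp =>
    rw [map_mul, pderiv_mul, pderiv_mul, map_add, map_mul, map_mul, hp, sh_X]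
    congr 1
    have : pderiv i (X j - C (ξ j)) = pderiv i (X j) := by
      rw [map_sub, pderiv_C, sub_zero]
    rw [this]
    congr 1
    rcases eq_or_ne i j with rfl | hne
    · rw [pderiv_X_self, map_one]
    · rw [pderiv_X_of_ne (Ne.symm hne), map_zero]

lemma pderiv_pow_sh (i : Fin n) (m : ℕ) (p : MvPolynomial (Fin n) ℂ) :
    (((pderiv i : Derivation ℂ _ _).toLinearMap) ^ m) (sh ξ p)
      = sh ξ ((((pderiv i : Derivation ℂ _ _).toLinearMap) ^ m) p) := by
  induction m with
  | zero => simp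
  | succ m ih =>
    rw [pow_succ', Module.End.mul_apply, Module.End.mul_apply, ih]
    exact pderiv_sh ξ i _

lemma pdiff_sh (σ : Fin n →₀ ℕ) (p : MvPolynomial (Fin n) ℂ) :
    pdiff σ (sh ξ p) = sh ξ (pdiff σ p) := by
  induction σ using Finsupp.induction generalizing p with
  | zero => rw [pdiff_zero']; rfl
  | single_add i m τ hiτ hm ih =>
    rw [Aux.pdiff_add, Module.End.mul_apply, Module.End.mul_apply, ih, Aux.pdiff_single,
      pderiv_pow_sh]

lemma eval_xpow_self (τ : Fin n →₀ ℕ) :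
    eval ξ (xpow ξ τ) = if τ = 0 then 1 else 0 := by
  rcases eq_or_ne τ 0 with rfl | h
  · simp [xpow]
  · rw [if_neg h]
    have : ∃ i, τ i ≠ 0 := by
      by_contra hc
      push_neg at hc
      exact h (Finsupp.ext hc)
    obtain ⟨i, hi⟩ := this
    rw [xpow, map_prod]
    apply Finset.prod_eq_zero (Finset.mem_univ i)
    rw [map_pow, map_sub, eval_X, eval_C, sub_self, zero_pow hi]

lemma eval_pdiff_sh_monomial (γ β : Fin n →₀ ℕ) (c : ℂ) :
    eval ξ (pdiff γ (sh ξ (monomial β c))) = if γ = β then c * (mfact β : ℂ) else 0 := by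
  rw [pdiff_sh, Aux.pdiff_monomial, sh_monomial, eval_mul, eval_C, eval_xpow_self]
  rcases eq_or_ne γ β with rfl | h
  · rw [if_pos rfl, tsub_self, if_pos rfl, mul_one]
    congr 1
    unfold mfact
    push_cast
    exact Finset.prod_congr rfl fun i _ => by rw [Nat.descFactorial_self]
  · rw [if_neg h]
    by_cases h2 : β - γ = (0 : Fin n →₀ ℕ)
    · rw [if_pos h2, mul_one]
      have hex : ∃ i, β i < γ i := by
        by_contra hc
        push_neg at hc
        apply h
        apply Finsupp.ext
        intro i
        have hbi : β i - γ i = 0 := by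
          have := congrArg (fun f : Fin n →₀ ℕ => f i) h2
          simpa [Finsupp.tsub_apply] using this
        have : β i ≤ γ i := Nat.sub_eq_zero_iff_le.mp hbi
        exact Nat.le_antisymm (hc i) this
      obtain ⟨i, hi⟩ := hex
      have : (∏ l, (((β l).descFactorial (γ l)) : ℂ)) = 0 :=
        Finset.prod_eq_zero (Finset.mem_univ i)
          (by rw [Nat.descFactorial_eq_zero_iff_lt.mpr hi, Nat.cast_zero])
      rw [this, mul_zero]
    · rw [if_neg h2, mul_zero]

lemma eval_pdiff_xpow (γ β : Fin n →₀ ℕ) :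
    eval ξ (pdiff γ (xpow ξ β)) = if γ = β then (mfact β : ℂ) else 0 := by
  have := eval_pdiff_sh_monomial ξ γ β 1
  rw [sh_monomial, map_one, one_mul] at this
  rw [this]
  simp

end Shift

section Dapply
variable {n : ℕ} (ξ : Fin n → ℂ) (Λ : (Fin n →₀ ℕ) →₀ ℂ)

lemma dapply_add (p q : MvPolynomial (Fin n) ℂ) :
    dapply ξ Λ (p + q) = dapply ξ Λ p + dapply ξ Λ q := by
  unfold dapply
  rw [← Finsupp.sum_add]
  exact Finsupp.sum_congr fun β _ => by rw [map_add, map_add, mul_add]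

lemma dapply_smul (c : ℂ) (p : MvPolynomial (Fin n) ℂ) :
    dapply ξ Λ (c • p) = c * dapply ξ Λ p := by
  unfold dapply
  rw [Finsupp.mul_sum]
  refine Finsupp.sum_congr fun β _ => ?_
  rw [map_smul, smul_eq_C_mul, eval_mul, eval_C]
  ring

lemma dapply_zero (p : MvPolynomial (Fin n) ℂ) : dapply ξ 0 p = 0 := by
  simp [dapply]

lemma dapply_zero' : dapply ξ Λ 0 = 0 := by
  simp [dapply]

def dapplyP : MvPolynomial (Fin n) ℂ →ₗ[ℂ] ℂ where
  toFun p := dapply ξ Λ p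
  map_add' p q := dapply_add ξ Λ p q
  map_smul' c p := by change dapply ξ Λ (c • p) = c • dapply ξ Λ p; rw [dapply_smul]; rfl

lemma dapply_sub (p q : MvPolynomial (Fin n) ℂ) :
    dapply ξ Λ (p - q) = dapply ξ Λ p - dapply ξ Λ q :=
  map_sub (dapplyP ξ Λ) p q

lemma dapply_finsum {ι : Type*} (s : Finset ι) (g : ι → MvPolynomial (Fin n) ℂ) :
    dapply ξ Λ (∑ x ∈ s, g x) = ∑ x ∈ s, dapply ξ Λ (g x) :=
  map_sum (dapplyP ξ Λ) g s

lemma dapply_xpow (β : Fin n →₀ ℕ) :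
    dapply ξ Λ (xpow ξ β) = Λ β * (mfact β : ℂ) := by
  unfold dapply
  have h : ∀ σ c, c * eval ξ (pdiff σ (xpow ξ β))
      = if σ = β then c * (mfact β : ℂ) else 0 := by
    intro σ c
    rw [Aux.eval_pdiff_xpow]
    split_ifs <;> ring
  rw [show (Λ.sum fun σ c => c * eval ξ (pdiff σ (xpow ξ β)))
      = Λ.sum fun σ c => if σ = β then c * (mfact β : ℂ) else 0 from
    Finsupp.sum_congr fun σ _ => h σ (Λ σ)]
  rw [Finsupp.sum_ite_eq' Λ β (fun _ c => c * (mfact β : ℂ))]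
  split_ifs with hmem
  · rfl
  · rw [Finsupp.notMem_support_iff.mp hmem, zero_mul]

end Dapply

section Mdeg
variable {n : ℕ}

lemma mdeg_zero : mdeg (0 : Fin n →₀ ℕ) = 0 := by simp [mdeg]

lemma mdeg_add (σ τ : Fin n →₀ ℕ) : mdeg (σ + τ) = mdeg σ + mdeg τ :=
  Finsupp.sum_add_index' (fun _ => rfl) (fun _ _ _ => rfl)

lemma mdeg_single (i : Fin n) (m : ℕ) : mdeg (Finsupp.single i m) = m :=
  Finsupp.sum_single_index rfl

lemma mdeg_eq_sum (γ : Fin n →₀ ℕ) : mdeg γ = ∑ i, γ i :=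
  Finsupp.sum_fintype _ _ (fun _ => rfl)

lemma apply_le_mdeg (γ : Fin n →₀ ℕ) (i : Fin n) : γ i ≤ mdeg γ := by
  rw [mdeg_eq_sum]
  exact Finset.single_le_sum (fun l _ => Nat.zero_le (γ l)) (Finset.mem_univ i)

lemma mdeg_eq_zero {γ : Fin n →₀ ℕ} : mdeg γ = 0 ↔ γ = 0 := by
  constructor
  · intro h
    apply Finsupp.ext
    intro i
    have := apply_le_mdeg γ i
    simp only [Finsupp.coe_zero, Pi.zero_apply]
    omega
  · rintro rfl; exact mdeg_zero

lemma exists_sub_single {γ : Fin n →₀ ℕ} (h : γ ≠ 0) :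
    ∃ (i : Fin n) (σ : Fin n →₀ ℕ), γ = σ + Finsupp.single i 1 ∧ mdeg σ + 1 = mdeg γ := by
  have : ∃ i, γ i ≠ 0 := by
    by_contra hc; push_neg at hc; exact h (Finsupp.ext hc)
  obtain ⟨i, hi⟩ := this
  refine ⟨i, γ - Finsupp.single i 1, ?_, ?_⟩
  · rw [tsub_add_cancel_of_le]
    rw [Finsupp.single_le_iff]
    omega
  · have h2 : γ - Finsupp.single i 1 + Finsupp.single i 1 = γ := by
      rw [tsub_add_cancel_of_le]
      rw [Finsupp.single_le_iff]
      omega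
    calc mdeg (γ - Finsupp.single i 1) + 1
        = mdeg (γ - Finsupp.single i 1 + Finsupp.single i 1) := by
          rw [mdeg_add, mdeg_single]
      _ = mdeg γ := by rw [h2]

end Mdeg


section MatFrame

variable {n δ : ℕ} (α : Fin δ → (Fin n →₀ ℕ))

def box (n δ : ℕ) : Finset (Fin n →₀ ℕ) :=
  Finset.Iic (Finsupp.equivFunOnFinite.symm fun _ : Fin n => δ)

lemma mem_box {γ : Fin n →₀ ℕ} : γ ∈ box n δ ↔ ∀ i, γ i ≤ δ := by
  simp only [box, Finset.mem_Iic, Finsupp.le_def, Finsupp.coe_equivFunOnFinite_symm]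

variable {S : Type} [CommRing S] [Algebra ℂ S]
variable (φ : MvPolynomial (Subtype (UsedPair α)) ℂ →ₐ[ℂ] S)

def Mm (i : Fin n) : Matrix (Fin δ) (Fin δ) S := (pmm α ℂ i).map φ

def Pm (γ : Fin n →₀ ℕ) : Matrix (Fin δ) (Fin δ) S :=
  (List.ofFn fun i : Fin n => Mm α φ i ^ γ i).prod

lemma Pm_map (γ : Fin n →₀ ℕ) :
    ((List.ofFn fun i : Fin n => (pmm α ℂ i) ^ (γ i)).prod).map φ = Pm α φ γ := by
  have hmm : ∀ M : Matrix (Fin δ) (Fin δ) (MvPolynomial (Subtype (UsedPair α)) ℂ),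
      M.map φ = φ.mapMatrix M := fun _ => rfl
  rw [hmm, map_list_prod, List.map_ofFn]
  unfold Pm
  refine congrArg List.prod ?_
  have he : (⇑φ.mapMatrix ∘ fun i : Fin n => pmm α ℂ i ^ γ i)
      = fun i : Fin n => Mm α φ i ^ γ i := by
    funext i
    simp only [Function.comp_apply, map_pow, AlgHom.mapMatrix_apply]
    rfl
  rw [he]

lemma Pm_zero : Pm α φ 0 = 1 := by
  unfold Pm
  apply List.prod_eq_one
  intro x hx
  rw [List.mem_ofFn] at hx
  obtain ⟨l, rfl⟩ := hx
  simp

lemma Pm_add (Hc : ∀ i i', Mm α φ i * Mm α φ i' = Mm α φ i' * Mm α φ i) (σ τ : Fin n →₀ ℕ) : Pm α φ (σ + τ) = Pm α φ σ * Pm α φ τ := by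
  unfold Pm
  simp only [Finsupp.add_apply]
  exact ofFn_prod_pow_add _ (fun i j => Hc i j) _ _

lemma Pm_single (i : Fin n) (m : ℕ) : Pm α φ (Finsupp.single i m) = Mm α φ i ^ m :=
  ofFn_prod_pow_single _ i m

lemma Pm_shift (Hc : ∀ i i', Mm α φ i * Mm α φ i' = Mm α φ i' * Mm α φ i)
    (σ : Fin n →₀ ℕ) (i : Fin n) :
    Pm α φ (σ + Finsupp.single i 1) = Mm α φ i * Pm α φ σ := by
  rw [add_comm, Pm_add α φ Hc, Pm_single, pow_one]

def LowerM (m : ℕ) (M : Matrix (Fin δ) (Fin δ) S) : Prop :=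
  ∀ j k, ¬ (mdeg (α k) + m ≤ mdeg (α j)) → M j k = 0

lemma LowerM_one : LowerM α 0 (1 : Matrix (Fin δ) (Fin δ) S) := by
  intro j k h
  apply Matrix.one_apply_ne
  rintro rfl
  exact h (by omega)

lemma LowerM_mul {m m' : ℕ} {M M' : Matrix (Fin δ) (Fin δ) S}
    (h1 : LowerM α m M) (h2 : LowerM α m' M') : LowerM α (m + m') (M * M') := by
  intro j k h
  rw [Matrix.mul_apply]
  apply Finset.sum_eq_zero
  intro l _
  by_cases hl : mdeg (α l) + m ≤ mdeg (α j)
  · by_cases hl2 : mdeg (α k) + m' ≤ mdeg (α l)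
    · exact absurd (by omega) h
    · rw [h2 _ _ hl2, mul_zero]
  · rw [h1 _ _ hl, zero_mul]

lemma LowerM_mono {m m' : ℕ} {M : Matrix (Fin δ) (Fin δ) S}
    (h : LowerM α m M) (hle : m' ≤ m) : LowerM α m' M :=
  fun j k hk => h j k (fun hc => hk (by omega))

lemma LowerM_pow {m : ℕ} {M : Matrix (Fin δ) (Fin δ) S} (h : LowerM α m M) :
    ∀ t, LowerM α (m * t) (M ^ t) := by
  intro t
  induction t with
  | zero => rw [pow_zero]; exact LowerM_mono α (LowerM_one α) (by omega)
  | succ t ih =>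
    rw [pow_succ]
    exact LowerM_mono α (LowerM_mul α ih h) (by ring_nf; omega)

lemma LowerM_smul (c : ℂ) {m : ℕ} {M : Matrix (Fin δ) (Fin δ) S}
    (h : LowerM α m M) : LowerM α m (c • M) := by
  intro j k hk
  rw [Matrix.smul_apply, h j k hk, smul_zero]

lemma LowerM_sum {ι : Type*} {s : Finset ι} {m : ℕ} {M : ι → Matrix (Fin δ) (Fin δ) S}
    (h : ∀ x ∈ s, LowerM α m (M x)) : LowerM α m (∑ x ∈ s, M x) := by
  intro j k hk
  rw [Matrix.sum_apply]
  exact Finset.sum_eq_zero fun x hx => h x hx j k hk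

lemma LowerM_pmm (i : Fin n) :
    LowerM α 1 (pmm α ℂ i) := by
  intro j k h
  rw [pmm, Matrix.of_apply]
  split_ifs with h1 h2 h3
  · exfalso
    apply h
    rw [h1, mdeg_add, mdeg_single]
  · rfl
  · exact absurd (by omega) h
  · rfl

lemma LowerM_Mm (i : Fin n) : LowerM α 1 (Mm α φ i) := by
  intro j k h
  have := LowerM_pmm α i j k h
  unfold Mm
  rw [Matrix.map_apply, this, map_zero]

lemma LowerM_list (L : List ((ℕ × Matrix (Fin δ) (Fin δ) S)))
    (h : ∀ p ∈ L, LowerM α p.1 p.2) :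
    LowerM α (L.map Prod.fst).sum (L.map Prod.snd).prod := by
  induction L with
  | nil => simpa using LowerM_one α
  | cons a L ih =>
    simp only [List.map_cons, List.sum_cons, List.prod_cons]
    exact LowerM_mul α (h a List.mem_cons_self)
      (ih fun p hp => h p (List.mem_cons_of_mem a hp))

lemma LowerM_Pm (γ : Fin n →₀ ℕ) : LowerM α (mdeg γ) (Pm α φ γ) := by
  have key := LowerM_list α (L := List.ofFn fun i : Fin n => (γ i, Mm α φ i ^ γ i))
    (fun p hp => by
      rw [List.mem_ofFn] at hp
      obtain ⟨i, rfl⟩ := hp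
      exact LowerM_mono α (LowerM_pow α (LowerM_Mm α φ i) (γ i)) (by simp))
  rw [List.map_ofFn, List.map_ofFn, List.sum_ofFn] at key
  have h1 : mdeg γ = ∑ i : Fin n, (Prod.fst ∘ fun i : Fin n => (γ i, Mm α φ i ^ γ i)) i := by
    rw [mdeg_eq_sum]; rfl
  have h2 : Pm α φ γ = (List.ofFn (Prod.snd ∘ fun i : Fin n => (γ i, Mm α φ i ^ γ i))).prod := by
    rfl
  rw [h1, h2]
  exact key

lemma LowerM_zero_of_ge (hr : ∀ j, mdeg (α j) < δ) {m : ℕ} {M : Matrix (Fin δ) (Fin δ) S}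
    (h : LowerM α m M) (hm : δ ≤ m) : M = 0 := by
  ext j k
  rw [Matrix.zero_apply]
  exact h j k (fun hc => by have := hr j; omega)


end MatFrame

section PdiffShift
variable {n : ℕ} (ξ : Fin n → ℂ)

lemma finsupp_add_sub_single (β : Fin n →₀ ℕ) (i : Fin n) :
    β + Finsupp.single i 1 - Finsupp.single i 1 = β := by
  ext l
  rw [Finsupp.tsub_apply, Finsupp.add_apply, Nat.add_sub_cancel]

lemma eval_pdiff_shift (γ : Fin n →₀ ℕ) (i : Fin n) (p : MvPolynomial (Fin n) ℂ) :
    eval ξ (pdiff γ ((X i - C (ξ i)) * p))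
      = (γ i : ℂ) * eval ξ (pdiff (γ - Finsupp.single i 1) p) := by
  suffices h : ∀ r, eval ξ (pdiff γ ((X i - C (ξ i)) * sh ξ r))
      = (γ i : ℂ) * eval ξ (pdiff (γ - Finsupp.single i 1) (sh ξ r)) by
    have := h (shinv ξ p)
    rwa [sh_shinv] at this
  intro r
  induction r using MvPolynomial.induction_on' with
  | monomial β c =>
    have hXmul : (X i - C (ξ i)) * sh ξ (monomial β c)
        = sh ξ (monomial (β + Finsupp.single i 1) c) := by
      rw [sh_monomial, sh_monomial, xpow_add_single]
      ring
    rw [hXmul, eval_pdiff_sh_monomial, eval_pdiff_sh_monomial]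
    rcases eq_or_ne γ (β + Finsupp.single i 1) with rfl | hne
    · rw [if_pos rfl]
      have h1 : β + Finsupp.single i 1 - Finsupp.single i 1 = β := finsupp_add_sub_single β i
      rw [h1, if_pos rfl]
      have h2 : ((β + Finsupp.single i 1 : Fin n →₀ ℕ)) i = β i + 1 := by
        rw [Finsupp.add_apply, Finsupp.single_eq_same]
      rw [h2, mfact_add_single]
      push_cast
      ring
    · rw [if_neg hne]
      rcases eq_or_ne (γ i) 0 with h0 | h0
      · rw [h0, Nat.cast_zero, zero_mul]
      · rw [if_neg ?_, mul_zero]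
        intro hEq
        apply hne
        rw [← hEq, tsub_add_cancel_of_le]
        rw [Finsupp.single_le_iff]
        omega
  | add a b ha hb =>
    rw [map_add, mul_add, map_add, map_add, map_add, map_add, ha, hb]
    ring

end PdiffShift

section PhiFrame
variable {n δ : ℕ} [NeZero δ] (α : Fin δ → (Fin n →₀ ℕ)) (ξ : Fin n → ℂ)
variable {S : Type} [CommRing S] [Algebra ℂ S]
variable (φ : MvPolynomial (Subtype (UsedPair α)) ℂ →ₐ[ℂ] S)

lemma mulVec_csmul (M : Matrix (Fin δ) (Fin δ) S) (c : ℂ) (v : Fin δ → S) :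
    M.mulVec (c • v) = c • M.mulVec v := by
  funext j
  simp only [Matrix.mulVec, dotProduct, Pi.smul_apply, Finset.smul_sum, mul_smul_comm]

lemma mulVec_finset_sum {ι : Type*} (s : Finset ι) (M : Matrix (Fin δ) (Fin δ) S)
    (v : ι → Fin δ → S) :
    M.mulVec (∑ x ∈ s, v x) = ∑ x ∈ s, M.mulVec (v x) := by
  classical
  induction s using Finset.induction_on with
  | empty => simp [Matrix.mulVec_zero]
  | insert _ _ hx ih =>
    rw [Finset.sum_insert hx, Finset.sum_insert hx, Matrix.mulVec_add, ih]

def Phi (p : MvPolynomial (Fin n) ℂ) : Fin δ → S := fun j =>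
  ∑ γ ∈ box n δ, ((mfact γ : ℂ)⁻¹ * eval ξ (pdiff γ p)) •
    ((Pm α φ γ).mulVec (Pi.single 0 1) j)

lemma map_pnfXi (p : MvPolynomial (Fin n) ℂ) (j : Fin δ) :
    φ (pnfXi α ξ p j) = Phi α ξ φ p j := by
  unfold pnfXi Phi
  rw [map_sum]
  apply Finset.sum_congr rfl
  intro γ _
  rw [map_smul, map_mul]
  have h1 : φ (C (eval ξ (pdiff γ p))) = algebraMap ℂ S (eval ξ (pdiff γ p)) := by
    rw [← MvPolynomial.algebraMap_eq]
    exact φ.commutes _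
  have h2 : φ (((List.ofFn fun i : Fin n => (pmm α ℂ i) ^ (γ i)).prod.mulVec
        (Pi.single 0 1)) j) = (Pm α φ γ).mulVec (Pi.single 0 1) j := by
    simp only [Matrix.mulVec_single, MulOpposite.op_one, one_smul]
    rw [← Pm_map α φ γ]
    rfl
  rw [h1, h2, mul_smul, ← Algebra.smul_def]

lemma Phi_add (p q : MvPolynomial (Fin n) ℂ) :
    Phi α ξ φ (p + q) = Phi α ξ φ p + Phi α ξ φ q := by
  funext j
  unfold Phi
  rw [Pi.add_apply, ← Finset.sum_add_distrib]
  apply Finset.sum_congr rfl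
  intro γ _
  rw [map_add, map_add, mul_add, add_smul]

lemma Phi_smul (c : ℂ) (p : MvPolynomial (Fin n) ℂ) :
    Phi α ξ φ (c • p) = c • Phi α ξ φ p := by
  funext j
  unfold Phi
  rw [Pi.smul_apply, Finset.smul_sum]
  apply Finset.sum_congr rfl
  intro γ _
  rw [map_smul, smul_eq_C_mul, eval_mul, eval_C, smul_smul]
  ring_nf

lemma Phi_zero : Phi α ξ φ 0 = 0 := by
  funext j
  unfold Phi
  apply Finset.sum_eq_zero
  intro γ _
  rw [map_zero, map_zero, mul_zero, zero_smul]

lemma Phi_sub (p q : MvPolynomial (Fin n) ℂ) :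
    Phi α ξ φ (p - q) = Phi α ξ φ p - Phi α ξ φ q := by
  have h := Phi_add α ξ φ (p - q) q
  rw [sub_add_cancel] at h
  rw [h]
  abel

lemma Phi_finsum {ι : Type*} (s : Finset ι) (g : ι → MvPolynomial (Fin n) ℂ) :
    Phi α ξ φ (∑ x ∈ s, g x) = ∑ x ∈ s, Phi α ξ φ (g x) := by
  classical
  induction s using Finset.induction_on with
  | empty => simpa using Phi_zero α ξ φ
  | insert _ _ hx ih =>
    rw [Finset.sum_insert hx, Finset.sum_insert hx, Phi_add, ih]

lemma Phi_one : Phi α ξ φ 1 = Pi.single 0 1 := by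
  funext j
  unfold Phi
  have h0 : (0 : Fin n →₀ ℕ) ∈ box n δ := by
    rw [mem_box]; intro i; simp
  rw [Finset.sum_eq_single_of_mem 0 h0]
  · have he : (1 : MvPolynomial (Fin n) ℂ) = sh ξ (monomial 0 1) := by
      rw [sh_monomial, xpow_zero', map_one, one_mul]
    rw [he, eval_pdiff_sh_monomial, if_pos rfl, mfact_zero', Pm_zero]
    simp [Matrix.one_apply, Pi.single_apply, eq_comm]
  · intro γ _ hγ
    have he : (1 : MvPolynomial (Fin n) ℂ) = sh ξ (monomial 0 1) := by
      rw [sh_monomial, xpow_zero', map_one, one_mul]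
    rw [he, eval_pdiff_sh_monomial, if_neg hγ, mul_zero, zero_smul]

lemma Phi_shift (hr : ∀ j, mdeg (α j) < δ)
    (Hc : ∀ i i', Mm α φ i * Mm α φ i' = Mm α φ i' * Mm α φ i)
    (i : Fin n) (p : MvPolynomial (Fin n) ℂ) :
    Phi α ξ φ ((X i - C (ξ i)) * p) = (Mm α φ i).mulVec (Phi α ξ φ p) := by
  have hPhiEq : Phi α ξ φ p = ∑ γ ∈ box n δ,
      ((mfact γ : ℂ)⁻¹ * eval ξ (pdiff γ p)) • (Pm α φ γ).mulVec (Pi.single 0 1) := by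
    funext j
    rw [Finset.sum_apply]
    rfl
  have hRHS : (Mm α φ i).mulVec (Phi α ξ φ p) = ∑ σ ∈ box n δ,
      ((mfact σ : ℂ)⁻¹ * eval ξ (pdiff σ p)) •
        ((Mm α φ i * Pm α φ σ).mulVec (Pi.single 0 1)) := by
    rw [hPhiEq, mulVec_finset_sum]
    apply Finset.sum_congr rfl
    intro σ _
    rw [mulVec_csmul, Matrix.mulVec_mulVec]
  -- restrict RHS to the filtered set
  set B := (box n δ).filter (fun σ => σ i < δ) with hB
  have hRHS2 : (Mm α φ i).mulVec (Phi α ξ φ p) = ∑ σ ∈ B,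
      ((mfact σ : ℂ)⁻¹ * eval ξ (pdiff σ p)) •
        ((Mm α φ i * Pm α φ σ).mulVec (Pi.single 0 1)) := by
    rw [hRHS]
    apply (Finset.sum_subset (Finset.filter_subset _ _) ?_).symm
    intro σ hσ hσB
    have hσi : δ ≤ σ i := by
      by_contra hc
      exact hσB (Finset.mem_filter.mpr ⟨hσ, by omega⟩)
    have hz : Mm α φ i * Pm α φ σ = 0 := by
      apply LowerM_zero_of_ge α hr (LowerM_mul α (LowerM_Mm α φ i) (LowerM_Pm α φ σ))
      have := apply_le_mdeg σ i
      omega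
    rw [hz, Matrix.zero_mulVec, smul_zero]
  -- LHS
  have hLHS : Phi α ξ φ ((X i - C (ξ i)) * p) = ∑ γ ∈ box n δ,
      (((mfact γ : ℂ))⁻¹ * ((γ i : ℂ) * eval ξ (pdiff (γ - Finsupp.single i 1) p))) •
        ((Pm α φ γ).mulVec (Pi.single 0 1)) := by
    funext j
    unfold Phi
    rw [Finset.sum_apply]
    apply Finset.sum_congr rfl
    intro γ _
    rw [eval_pdiff_shift]
    rfl
  rw [hLHS, hRHS2]
  -- now reindex
  set A := (box n δ).filter (fun γ => γ i ≠ 0) with hA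
  have hstep : ∑ γ ∈ box n δ,
      (((mfact γ : ℂ))⁻¹ * ((γ i : ℂ) * eval ξ (pdiff (γ - Finsupp.single i 1) p))) •
        ((Pm α φ γ).mulVec (Pi.single 0 1))
      = ∑ γ ∈ A,
      (((mfact γ : ℂ))⁻¹ * ((γ i : ℂ) * eval ξ (pdiff (γ - Finsupp.single i 1) p))) •
        ((Pm α φ γ).mulVec (Pi.single 0 1)) := by
    apply (Finset.sum_subset (Finset.filter_subset _ _) ?_).symm
    intro γ hγ hγA
    have h0 : γ i = 0 := by
      by_contra hc
      exact hγA (Finset.mem_filter.mpr ⟨hγ, hc⟩)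
    rw [h0, Nat.cast_zero, zero_mul, mul_zero, zero_smul]
  rw [hstep]
  apply Finset.sum_nbij' (fun γ => γ - Finsupp.single i 1) (fun σ => σ + Finsupp.single i 1)
  · intro γ hγ
    rw [hA, Finset.mem_filter] at hγ
    obtain ⟨hγbox, hγi⟩ := hγ
    rw [hB, Finset.mem_filter]
    rw [mem_box] at hγbox ⊢
    constructor
    · intro l
      have := hγbox l
      rw [Finsupp.tsub_apply]
      omega
    · rw [Finsupp.tsub_apply, Finsupp.single_eq_same]
      have := hγbox i
      omega
  · intro σ hσ
    rw [hB, Finset.mem_filter] at hσ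
    obtain ⟨hσbox, hσi⟩ := hσ
    rw [hA, Finset.mem_filter]
    rw [mem_box] at hσbox ⊢
    constructor
    · intro l
      rcases eq_or_ne l i with rfl | hne
      · rw [Finsupp.add_apply, Finsupp.single_eq_same]
        omega
      · rw [Finsupp.add_apply, Finsupp.single_eq_of_ne' (Ne.symm hne), Nat.add_zero]
        exact hσbox l
    · rw [Finsupp.add_apply, Finsupp.single_eq_same]
      omega
  · intro γ hγ
    rw [hA, Finset.mem_filter] at hγ
    rw [tsub_add_cancel_of_le]
    rw [Finsupp.single_le_iff]
    omega
  · intro σ _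
    exact finsupp_add_sub_single σ i
  · intro γ hγ
    rw [hA, Finset.mem_filter] at hγ
    obtain ⟨hγbox, hγi⟩ := hγ
    set σ := γ - Finsupp.single i 1 with hσdef
    have hγσ : γ = σ + Finsupp.single i 1 := by
      rw [hσdef, tsub_add_cancel_of_le]
      rw [Finsupp.single_le_iff]
      omega
    have hco : ((mfact γ : ℂ))⁻¹ * (γ i : ℂ) = ((mfact σ : ℂ))⁻¹ := by
      have hm : mfact γ = (σ i + 1) * mfact σ := by
        rw [hγσ, mfact_add_single]
      have hgi : γ i = σ i + 1 := by
        rw [hγσ, Finsupp.add_apply, Finsupp.single_eq_same]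
      rw [hm, hgi]
      have hne : ((σ i : ℂ) + 1) ≠ 0 := by
        intro hcon
        have h' : ((σ i : ℂ) + 1) = ((σ i + 1 : ℕ) : ℂ) := by push_cast; ring
        rw [h'] at hcon
        exact (Nat.cast_ne_zero.mpr (Nat.succ_ne_zero _)) hcon
      push_cast
      rw [mul_comm ((σ i : ℂ) + 1) ((mfact σ : ℂ)), mul_inv, mul_assoc,
        inv_mul_cancel₀ hne, mul_one]
    have hPm : Pm α φ γ = Mm α φ i * Pm α φ σ := by
      rw [hγσ]
      exact Pm_shift α φ Hc σ i
    rw [hPm, ← hco, mul_assoc]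


lemma Phi_xpow_mul (hr : ∀ j, mdeg (α j) < δ)
    (Hc : ∀ i i', Mm α φ i * Mm α φ i' = Mm α φ i' * Mm α φ i)
    (γ : Fin n →₀ ℕ) (q : MvPolynomial (Fin n) ℂ) :
    Phi α ξ φ (xpow ξ γ * q) = (Pm α φ γ).mulVec (Phi α ξ φ q) := by
  have key : ∀ m : ℕ, ∀ γ : Fin n →₀ ℕ, mdeg γ = m →
      Phi α ξ φ (xpow ξ γ * q) = (Pm α φ γ).mulVec (Phi α ξ φ q) := by
    intro m
    induction m with
    | zero =>
      intro γ hγ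
      rw [mdeg_eq_zero.mp hγ, xpow_zero', one_mul, Pm_zero, Matrix.one_mulVec]
    | succ m ih =>
      intro γ hγ
      have hne : γ ≠ 0 := by
        intro hcon
        rw [hcon, mdeg_zero] at hγ
        omega
      obtain ⟨i, σ, hγeq, hm⟩ := exists_sub_single hne
      have hmσ : mdeg σ = m := by omega
      rw [hγeq, xpow_add_single, mul_assoc,
        show (X i - C (ξ i)) * (xpow ξ σ * q) = (X i - C (ξ i)) * (xpow ξ σ * q) from rfl,
        Phi_shift α ξ φ hr Hc, ih σ hmσ, Matrix.mulVec_mulVec, ← Pm_shift α φ Hc]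
  exact key (mdeg γ) γ rfl

lemma Phi_xpow (hr : ∀ j, mdeg (α j) < δ)
    (Hc : ∀ i i', Mm α φ i * Mm α φ i' = Mm α φ i' * Mm α φ i)
    (γ : Fin n →₀ ℕ) :
    Phi α ξ φ (xpow ξ γ) = (Pm α φ γ).mulVec (Pi.single 0 1) := by
  have := Phi_xpow_mul α ξ φ hr Hc γ 1
  rw [mul_one, Phi_one] at this
  exact this

def NMm (p : MvPolynomial (Fin n) ℂ) : Matrix (Fin δ) (Fin δ) S :=
  ∑ γ ∈ box n δ, ((mfact γ : ℂ)⁻¹ * eval ξ (pdiff γ p)) • Pm α φ γ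

lemma NMm_add (p q : MvPolynomial (Fin n) ℂ) :
    NMm α ξ φ (p + q) = NMm α ξ φ p + NMm α ξ φ q := by
  unfold NMm
  rw [← Finset.sum_add_distrib]
  apply Finset.sum_congr rfl
  intro γ _
  rw [map_add, map_add, mul_add, add_smul]

lemma NMm_smul (c : ℂ) (p : MvPolynomial (Fin n) ℂ) :
    NMm α ξ φ (c • p) = c • NMm α ξ φ p := by
  unfold NMm
  rw [Finset.smul_sum]
  apply Finset.sum_congr rfl
  intro γ _
  rw [map_smul, smul_eq_C_mul, eval_mul, eval_C, smul_smul]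
  ring_nf

lemma NMm_xpow (hr : ∀ j, mdeg (α j) < δ) (β : Fin n →₀ ℕ) :
    NMm α ξ φ (xpow ξ β) = Pm α φ β := by
  unfold NMm
  by_cases hβ : β ∈ box n δ
  · rw [Finset.sum_eq_single_of_mem β hβ]
    · rw [eval_pdiff_xpow, if_pos rfl, inv_mul_cancel₀ (mfact_cast_ne_zero β), one_smul]
    · intro γ _ hγ
      rw [eval_pdiff_xpow, if_neg hγ, mul_zero, zero_smul]
  · have h0 : Pm α φ β = 0 := by
      apply LowerM_zero_of_ge α hr (LowerM_Pm α φ β)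
      rw [mem_box] at hβ
      push_neg at hβ
      obtain ⟨i, hi⟩ := hβ
      have := apply_le_mdeg β i
      omega
    rw [h0]
    apply Finset.sum_eq_zero
    intro γ hγ
    have hne : γ ≠ β := fun hcon => hβ (hcon ▸ hγ)
    rw [eval_pdiff_xpow, if_neg hne, mul_zero, zero_smul]

lemma csmul_mulVec (c : ℂ) (M : Matrix (Fin δ) (Fin δ) S) (v : Fin δ → S) :
    (c • M).mulVec v = c • M.mulVec v := by
  funext j
  simp only [Matrix.mulVec, dotProduct, Matrix.smul_apply, Pi.smul_apply,
    Finset.smul_sum, smul_mul_assoc]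

lemma Phi_mul (hr : ∀ j, mdeg (α j) < δ)
    (Hc : ∀ i i', Mm α φ i * Mm α φ i' = Mm α φ i' * Mm α φ i)
    (p q : MvPolynomial (Fin n) ℂ) :
    Phi α ξ φ (p * q) = (NMm α ξ φ p).mulVec (Phi α ξ φ q) := by
  suffices h : ∀ r, Phi α ξ φ (sh ξ r * q) = (NMm α ξ φ (sh ξ r)).mulVec (Phi α ξ φ q) by
    have := h (shinv ξ p)
    rwa [sh_shinv] at this
  intro r
  induction r using MvPolynomial.induction_on' with
  | monomial β c =>
    rw [sh_monomial]
    have h1 : C c * xpow ξ β = c • xpow ξ β := by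
      rw [smul_eq_C_mul]
    rw [h1, smul_mul_assoc, Phi_smul, Phi_xpow_mul α ξ φ hr Hc, NMm_smul,
      csmul_mulVec, NMm_xpow α ξ φ hr]
  | add a b ha hb =>
    rw [map_add, add_mul, Phi_add, NMm_add, Matrix.add_mulVec, ha, hb]

lemma NM_isUnit (hr : ∀ j, mdeg (α j) < δ) (p : MvPolynomial (Fin n) ℂ)
    (hp : eval ξ p ≠ 0) : IsUnit (NMm α ξ φ p) := by
  have h0 : (0 : Fin n →₀ ℕ) ∈ box n δ := by
    rw [mem_box]; intro i; simp
  have hsplit : NMm α ξ φ p = (eval ξ p) • (1 : Matrix (Fin δ) (Fin δ) S)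
      + ∑ γ ∈ (box n δ).erase 0, ((mfact γ : ℂ)⁻¹ * eval ξ (pdiff γ p)) • Pm α φ γ := by
    unfold NMm
    rw [← Finset.add_sum_erase _ _ h0]
    congr 1
    rw [Pm_zero, mfact_zero', pdiff_zero']
    norm_num
  set T := ∑ γ ∈ (box n δ).erase 0, ((mfact γ : ℂ)⁻¹ * eval ξ (pdiff γ p)) • Pm α φ γ with hT
  have hTlow : LowerM α 1 T := by
    apply LowerM_sum
    intro γ hγ
    have hγne : γ ≠ 0 := (Finset.mem_erase.mp hγ).1
    apply LowerM_smul
    apply LowerM_mono α (LowerM_Pm α φ γ)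
    have : mdeg γ ≠ 0 := fun hcon => hγne (mdeg_eq_zero.mp hcon)
    omega
  have hTnil : IsNilpotent T := by
    refine ⟨δ, ?_⟩
    apply LowerM_zero_of_ge α hr (m := 1 * δ)
    · exact LowerM_pow α hTlow δ
    · omega
  have hu : IsUnit ((eval ξ p) • (1 : Matrix (Fin δ) (Fin δ) S)) := by
    refine ⟨⟨(eval ξ p) • 1, (eval ξ p)⁻¹ • 1, ?_, ?_⟩, rfl⟩
    · rw [smul_mul_assoc, one_mul, smul_smul, mul_inv_cancel₀ hp, one_smul]
    · rw [smul_mul_assoc, one_mul, smul_smul, inv_mul_cancel₀ hp, one_smul]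
  rw [hsplit]
  exact IsNilpotent.isUnit_add_left_of_commute hTnil hu
    (((Commute.one_right T).smul_right _))

lemma mulVec_cancel {M : Matrix (Fin δ) (Fin δ) S} (hM : IsUnit M) {v : Fin δ → S}
    (h : M.mulVec v = 0) : v = 0 := by
  obtain ⟨u, hu⟩ := hM
  have h1 : ((↑u⁻¹ : Matrix (Fin δ) (Fin δ) S) * M).mulVec v = 0 := by
    rw [← Matrix.mulVec_mulVec, h, Matrix.mulVec_zero]
  rw [← hu, Units.inv_mul, Matrix.one_mulVec] at h1
  exact h1

end PhiFrame

section Struct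
variable {n δ : ℕ} [NeZero δ]
variable (α : Fin δ → (Fin n →₀ ℕ)) (ξ : Fin n → ℂ)
variable (Λ : Fin δ → ((Fin n →₀ ℕ) →₀ ℂ))
variable (Q : Ideal (MvPolynomial (Fin n) ℂ))

lemma mdeg_alpha_lt (h0 : α 0 = 0)
    (hconn : ∀ j, α j ≠ 0 → ∃ (k : Fin δ) (i : Fin n), α j = α k + Finsupp.single i 1)
    (j : Fin δ) : mdeg (α j) < δ := by
  have down : ∀ m, (∃ j, mdeg (α j) = m) → ∀ m' ≤ m, ∃ k, mdeg (α k) = m' := by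
    intro m
    induction m with
    | zero =>
      rintro ⟨j, hj⟩ m' hm'
      rw [Nat.le_zero] at hm'
      exact hm' ▸ ⟨j, hj⟩
    | succ m ih =>
      rintro ⟨j, hj⟩ m' hm'
      rcases Nat.eq_or_lt_of_le hm' with rfl | h
      · exact ⟨j, hj⟩
      · have hne : α j ≠ 0 := fun hc => by rw [hc, mdeg_zero] at hj; omega
        obtain ⟨k, i, hk⟩ := hconn j hne
        have hdk : mdeg (α k) = m := by
          have := congrArg mdeg hk
          rw [mdeg_add, mdeg_single] at this
          omega
        exact ih ⟨k, hdk⟩ m' (by omega)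
  have hsub : Finset.Iic (mdeg (α j)) ⊆ Finset.image (fun k => mdeg (α k)) Finset.univ := by
    intro m' hm'
    rw [Finset.mem_Iic] at hm'
    obtain ⟨k, hk⟩ := down (mdeg (α j)) ⟨j, rfl⟩ m' hm'
    exact Finset.mem_image.mpr ⟨k, Finset.mem_univ k, hk⟩
  have hc1 : (Finset.Iic (mdeg (α j))).card = mdeg (α j) + 1 := Nat.card_Iic _
  have hc2 := Finset.card_le_card hsub
  have hc3 := Finset.card_image_le (f := fun k => mdeg (α k)) (s := (Finset.univ : Finset (Fin δ)))
  rw [Finset.card_univ, Fintype.card_fin] at hc3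
  omega

lemma alpha_inj (b : Module.Basis (Fin δ) ℂ (MvPolynomial (Fin n) ℂ ⧸ Q))
    (hb : ∀ i, b i = Ideal.Quotient.mk Q (xpow ξ (α i))) :
    Function.Injective α := by
  intro i j hij
  apply b.injective
  rw [hb, hb, hij]

lemma coord (b : Module.Basis (Fin δ) ℂ (MvPolynomial (Fin n) ℂ ⧸ Q))
    (hb : ∀ i, b i = Ideal.Quotient.mk Q (xpow ξ (α i)))
    (hdual : ∀ i, ∀ p ∈ Q, dapply ξ (Λ i) p = 0)
    (hpair : ∀ i j, dapply ξ (Λ i) (xpow ξ (α j)) = if i = j then 1 else 0)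
    (p : MvPolynomial (Fin n) ℂ) :
    p - ∑ k, (dapply ξ (Λ k) p) • xpow ξ (α k) ∈ Q := by
  set d : Fin δ → ℂ := fun k => b.repr (Ideal.Quotient.mk Q p) k with hd
  have hsum : Ideal.Quotient.mk Q p = Ideal.Quotient.mk Q (∑ k, d k • xpow ξ (α k)) := by
    have h1 := b.sum_repr (Ideal.Quotient.mk Q p)
    calc Ideal.Quotient.mk Q p = ∑ k, d k • b k := h1.symm
      _ = ∑ k, d k • (Ideal.Quotient.mkₐ ℂ Q) (xpow ξ (α k)) := by
          apply Finset.sum_congr rfl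
          intro k _
          rw [hb k, Ideal.Quotient.mkₐ_eq_mk]
      _ = (Ideal.Quotient.mkₐ ℂ Q) (∑ k, d k • xpow ξ (α k)) := by
          rw [map_sum]
          apply Finset.sum_congr rfl
          intro k _
          rw [map_smul]
      _ = Ideal.Quotient.mk Q (∑ k, d k • xpow ξ (α k)) := by
          rw [Ideal.Quotient.mkₐ_eq_mk]
  have hmem : p - ∑ k, d k • xpow ξ (α k) ∈ Q := Ideal.Quotient.eq.mp hsum
  have hdk : ∀ j, d j = dapply ξ (Λ j) p := by
    intro j
    have h0 := hdual j _ hmem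
    rw [dapply_sub, dapply_finsum] at h0
    have he : ∀ k, dapply ξ (Λ j) (d k • xpow ξ (α k)) = if j = k then d k else 0 := by
      intro k
      rw [dapply_smul, hpair]
      split_ifs <;> ring
    rw [Finset.sum_congr rfl (fun k _ => he k), Finset.sum_ite_eq Finset.univ j (fun k => d k),
      if_pos (Finset.mem_univ j)] at h0
    have := sub_eq_zero.mp h0
    rw [this]
  have hfin : ∑ k, (dapply ξ (Λ k) p) • xpow ξ (α k) = ∑ k, d k • xpow ξ (α k) := by
    apply Finset.sum_congr rfl
    intro k _
    rw [hdk k]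
  rw [hfin]
  exact hmem

def Tm (i : Fin n) : Matrix (Fin δ) (Fin δ) ℂ :=
  Matrix.of fun j k => dapply ξ (Λ j) (xpow ξ (α k + Finsupp.single i 1))

lemma dapply_mul_shift (b : Module.Basis (Fin δ) ℂ (MvPolynomial (Fin n) ℂ ⧸ Q))
    (hb : ∀ i, b i = Ideal.Quotient.mk Q (xpow ξ (α i)))
    (hdual : ∀ i, ∀ p ∈ Q, dapply ξ (Λ i) p = 0)
    (hpair : ∀ i j, dapply ξ (Λ i) (xpow ξ (α j)) = if i = j then 1 else 0)
    (i : Fin n) (j : Fin δ) (p : MvPolynomial (Fin n) ℂ) :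
    dapply ξ (Λ j) ((X i - C (ξ i)) * p)
      = ∑ k, (Tm α ξ Λ i) j k * dapply ξ (Λ k) p := by
  have hc := coord α ξ Λ Q b hb hdual hpair p
  have hmem2 : (X i - C (ξ i)) * (p - ∑ k, (dapply ξ (Λ k) p) • xpow ξ (α k)) ∈ Q :=
    Ideal.mul_mem_left _ _ hc
  have h0 := hdual j _ hmem2
  rw [mul_sub, dapply_sub, Finset.mul_sum, dapply_finsum] at h0
  have he : ∀ k, dapply ξ (Λ j) ((X i - C (ξ i)) * ((dapply ξ (Λ k) p) • xpow ξ (α k)))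
      = (Tm α ξ Λ i) j k * dapply ξ (Λ k) p := by
    intro k
    rw [mul_smul_comm, dapply_smul, ← xpow_add_single]
    rw [Tm, Matrix.of_apply]
    ring
  rw [Finset.sum_congr rfl (fun k _ => he k)] at h0
  exact sub_eq_zero.mp h0

lemma Tm_mul_entry (b : Module.Basis (Fin δ) ℂ (MvPolynomial (Fin n) ℂ ⧸ Q))
    (hb : ∀ i, b i = Ideal.Quotient.mk Q (xpow ξ (α i)))
    (hdual : ∀ i, ∀ p ∈ Q, dapply ξ (Λ i) p = 0)
    (hpair : ∀ i j, dapply ξ (Λ i) (xpow ξ (α j)) = if i = j then 1 else 0)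
    (i i' : Fin n) (j k : Fin δ) :
    (Tm α ξ Λ i * Tm α ξ Λ i') j k
      = dapply ξ (Λ j) (xpow ξ (α k + Finsupp.single i' 1 + Finsupp.single i 1)) := by
  rw [Matrix.mul_apply]
  have he : ∀ l, (Tm α ξ Λ i) j l * (Tm α ξ Λ i') l k
      = (Tm α ξ Λ i) j l * dapply ξ (Λ l) (xpow ξ (α k + Finsupp.single i' 1)) := by
    intro l; rfl
  rw [Finset.sum_congr rfl (fun l _ => he l),
    ← dapply_mul_shift α ξ Λ Q b hb hdual hpair, ← xpow_add_single]

lemma Tm_comm (b : Module.Basis (Fin δ) ℂ (MvPolynomial (Fin n) ℂ ⧸ Q))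
    (hb : ∀ i, b i = Ideal.Quotient.mk Q (xpow ξ (α i)))
    (hdual : ∀ i, ∀ p ∈ Q, dapply ξ (Λ i) p = 0)
    (hpair : ∀ i j, dapply ξ (Λ i) (xpow ξ (α j)) = if i = j then 1 else 0)
    (i i' : Fin n) :
    Tm α ξ Λ i * Tm α ξ Λ i' = Tm α ξ Λ i' * Tm α ξ Λ i := by
  ext j k
  rw [Tm_mul_entry α ξ Λ Q b hb hdual hpair, Tm_mul_entry α ξ Λ Q b hb hdual hpair]
  congr 2
  rw [add_assoc, add_assoc, add_comm (Finsupp.single i' 1)]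


def nuf : Subtype (UsedPair α) → ℂ := fun v => (Λ v.1.1) v.1.2 * (mfact v.1.2 : ℂ)

lemma eval_pmm (hinj : Function.Injective α)
    (hsupp : ∀ i β, β ∈ (Λ i).support → mdeg β ≤ mdeg (α i) ∧ (β = α i ∨ β ∉ Set.range α))
    (hpair : ∀ i j, dapply ξ (Λ i) (xpow ξ (α j)) = if i = j then 1 else 0)
    (i : Fin n) :
    Mm α (aeval (nuf α Λ) : MvPolynomial (Subtype (UsedPair α)) ℂ →ₐ[ℂ] ℂ) i
      = Tm α ξ Λ i := by
  ext j k
  rw [Mm, Matrix.map_apply, pmm, Matrix.of_apply, Tm, Matrix.of_apply]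
  split_ifs with h1 h2 h3
  · rw [map_one, ← h1, hpair j j, if_pos rfl]
  · rw [map_zero]
    obtain ⟨l, hl⟩ := h2
    have hjl : j ≠ l := fun hc => h1 (by rw [hc, hl])
    rw [← hl, hpair j l, if_neg hjl]
  · rw [aeval_X]
    exact (dapply_xpow ξ (Λ j) _).symm
  · rw [map_zero, dapply_xpow]
    have hz : (Λ j) (α k + Finsupp.single i 1) = 0 := by
      by_contra hc
      have hmem : (α k + Finsupp.single i 1) ∈ (Λ j).support :=
        Finsupp.mem_support_iff.mpr hc
      have := (hsupp j _ hmem).1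
      rw [mdeg_add, mdeg_single] at this
      omega
    rw [hz, zero_mul]

lemma PmMulVec_eval (hinj : Function.Injective α) (h0 : α 0 = 0)
    (b : Module.Basis (Fin δ) ℂ (MvPolynomial (Fin n) ℂ ⧸ Q))
    (hb : ∀ i, b i = Ideal.Quotient.mk Q (xpow ξ (α i)))
    (hdual : ∀ i, ∀ p ∈ Q, dapply ξ (Λ i) p = 0)
    (hsupp : ∀ i β, β ∈ (Λ i).support → mdeg β ≤ mdeg (α i) ∧ (β = α i ∨ β ∉ Set.range α))
    (hpair : ∀ i j, dapply ξ (Λ i) (xpow ξ (α j)) = if i = j then 1 else 0)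
    (γ : Fin n →₀ ℕ) (j : Fin δ) :
    (Pm α (aeval (nuf α Λ) : MvPolynomial (Subtype (UsedPair α)) ℂ →ₐ[ℂ] ℂ) γ).mulVec
        (Pi.single 0 1) j = dapply ξ (Λ j) (xpow ξ γ) := by
  set φν := (aeval (nuf α Λ) : MvPolynomial (Subtype (UsedPair α)) ℂ →ₐ[ℂ] ℂ) with hφν
  have Hc : ∀ i i', Mm α φν i * Mm α φν i' = Mm α φν i' * Mm α φν i := by
    intro i i'
    rw [eval_pmm α ξ Λ hinj hsupp hpair, eval_pmm α ξ Λ hinj hsupp hpair]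
    exact Tm_comm α ξ Λ Q b hb hdual hpair i i'
  have key : ∀ m : ℕ, ∀ γ : Fin n →₀ ℕ, mdeg γ = m → ∀ j,
      (Pm α φν γ).mulVec (Pi.single 0 1) j = dapply ξ (Λ j) (xpow ξ γ) := by
    intro m
    induction m with
    | zero =>
      intro γ hγ j
      rw [mdeg_eq_zero.mp hγ, Pm_zero, Matrix.one_mulVec, xpow_zero']
      have hx : (1 : MvPolynomial (Fin n) ℂ) = xpow ξ (α 0) := by rw [h0, xpow_zero']
      rw [hx, hpair j 0, Pi.single_apply]
    | succ m ih =>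
      intro γ hγ j
      have hne : γ ≠ 0 := by
        intro hcon; rw [hcon, mdeg_zero] at hγ; omega
      obtain ⟨i, σ, hγeq, hm⟩ := exists_sub_single hne
      have hmσ : mdeg σ = m := by omega
      rw [hγeq, Pm_shift α φν Hc, ← Matrix.mulVec_mulVec]
      have hMv : (Pm α φν σ).mulVec (Pi.single 0 1) = fun k => dapply ξ (Λ k) (xpow ξ σ) :=
        funext fun k => ih σ hmσ k
      rw [hMv, xpow_add_single]
      rw [dapply_mul_shift α ξ Λ Q b hb hdual hpair]
      have hT := eval_pmm α ξ Λ hinj hsupp hpair i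
      rw [← hT]
      rfl
  exact key (mdeg γ) γ rfl j

lemma Phi_eval_eq_dapply (h0 : α 0 = 0)
    (hconn : ∀ j, α j ≠ 0 → ∃ (k : Fin δ) (i : Fin n), α j = α k + Finsupp.single i 1)
    (hinj : Function.Injective α)
    (b : Module.Basis (Fin δ) ℂ (MvPolynomial (Fin n) ℂ ⧸ Q))
    (hb : ∀ i, b i = Ideal.Quotient.mk Q (xpow ξ (α i)))
    (hdual : ∀ i, ∀ p ∈ Q, dapply ξ (Λ i) p = 0)
    (hsupp : ∀ i β, β ∈ (Λ i).support → mdeg β ≤ mdeg (α i) ∧ (β = α i ∨ β ∉ Set.range α))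
    (hpair : ∀ i j, dapply ξ (Λ i) (xpow ξ (α j)) = if i = j then 1 else 0)
    (p : MvPolynomial (Fin n) ℂ) (j : Fin δ) :
    Phi α ξ (aeval (nuf α Λ) : MvPolynomial (Subtype (UsedPair α)) ℂ →ₐ[ℂ] ℂ) p j
      = dapply ξ (Λ j) p := by
  unfold Phi
  have hstep : ∀ γ, ((mfact γ : ℂ)⁻¹ * eval ξ (pdiff γ p)) •
      ((Pm α (aeval (nuf α Λ) : MvPolynomial (Subtype (UsedPair α)) ℂ →ₐ[ℂ] ℂ) γ).mulVec
        (Pi.single 0 1) j)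
      = (Λ j) γ * eval ξ (pdiff γ p) := by
    intro γ
    rw [PmMulVec_eval α ξ Λ Q hinj h0 b hb hdual hsupp hpair, dapply_xpow, smul_eq_mul]
    have := mfact_cast_ne_zero (n := n) γ
    field_simp
  rw [Finset.sum_congr rfl (fun γ _ => hstep γ)]
  unfold dapply
  rw [Finsupp.sum_of_support_subset (Λ j) ?_ _ (fun γ _ => by rw [zero_mul])]
  have hsub : (Λ j).support ⊆ box n δ := by
    intro γ hγ
    rw [mem_box]
    intro i
    have h1 := (hsupp j γ hγ).1
    have h2 := mdeg_alpha_lt α h0 hconn j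
    have h3 := apply_le_mdeg γ i
    omega
  exact hsub

lemma map_comm_entry {S : Type} [CommRing S] [Algebra ℂ S]
    (φ : MvPolynomial (Subtype (UsedPair α)) ℂ →ₐ[ℂ] S)
    (i i' : Fin n) (j k : Fin δ) :
    φ ((pmm α ℂ i * pmm α ℂ i' - pmm α ℂ i' * pmm α ℂ i) j k)
      = (Mm α φ i * Mm α φ i' - Mm α φ i' * Mm α φ i) j k := by
  rw [Matrix.sub_apply, Matrix.sub_apply, map_sub]
  congr 1 <;>
  · rw [Matrix.mul_apply, Matrix.mul_apply, map_sum]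
    exact Finset.sum_congr rfl fun l _ => by rw [map_mul]; rfl

lemma Pm_alpha_mulVec {S : Type} [CommRing S] [Algebra ℂ S]
    (φ : MvPolynomial (Subtype (UsedPair α)) ℂ →ₐ[ℂ] S)
    (Hc : ∀ i i', Mm α φ i * Mm α φ i' = Mm α φ i' * Mm α φ i)
    (hinj : Function.Injective α) (h0 : α 0 = 0)
    (hconn : ∀ j, α j ≠ 0 → ∃ (k : Fin δ) (i : Fin n), α j = α k + Finsupp.single i 1)
    (k : Fin δ) :
    (Pm α φ (α k)).mulVec (Pi.single 0 1) = Pi.single k 1 := by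
  have key : ∀ m : ℕ, ∀ k : Fin δ, mdeg (α k) = m →
      (Pm α φ (α k)).mulVec (Pi.single 0 1) = Pi.single k 1 := by
    intro m
    induction m with
    | zero =>
      intro k hk
      have hαk : α k = 0 := mdeg_eq_zero.mp hk
      have hk0 : k = 0 := hinj (by rw [hαk, h0])
      rw [hαk, Pm_zero, Matrix.one_mulVec, hk0]
    | succ m ih =>
      intro k hk
      have hne : α k ≠ 0 := by
        intro hcon; rw [hcon, mdeg_zero] at hk; omega
      obtain ⟨k', i, hkeq⟩ := hconn k hne
      have hmk' : mdeg (α k') = m := by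
        have := congrArg mdeg hkeq
        rw [mdeg_add, mdeg_single] at this
        omega
      rw [hkeq, Pm_shift α φ Hc, ← Matrix.mulVec_mulVec, ih k' hmk', Matrix.mulVec_single]
      funext l
      simp only [MulOpposite.op_one, one_smul, Matrix.col_apply]
      rcases eq_or_ne l k with rfl | hlk
      · rw [Mm, Matrix.map_apply, pmm, Matrix.of_apply, if_pos (by rw [← hkeq]), map_one,
          Pi.single_eq_same]
      · have hbr1 : α l ≠ α k' + Finsupp.single i 1 := by
          rw [← hkeq]
          exact fun hc => hlk (hinj hc)
        have hbr2 : ∃ l', α l' = α k' + Finsupp.single i 1 := ⟨k, hkeq⟩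
        rw [Mm, Matrix.map_apply, pmm, Matrix.of_apply, if_neg hbr1, dif_pos hbr2, map_zero,
          Pi.single_eq_of_ne hlk]
  exact key (mdeg (α k)) k rfl

lemma Phi_vanish_Q {S : Type} [CommRing S] [Algebra ℂ S] {N : ℕ}
    (φ : MvPolynomial (Subtype (UsedPair α)) ℂ →ₐ[ℂ] S)
    (f : Fin N → MvPolynomial (Fin n) ℂ)
    (hr : ∀ j, mdeg (α j) < δ)
    (Hc : ∀ i i', Mm α φ i * Mm α φ i' = Mm α φ i' * Mm α φ i)
    (Hf : ∀ k, Phi α ξ φ (f k) = 0)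
    (hcomp : ∀ q ∈ Q, ∃ p, eval ξ p ≠ 0 ∧ p * q ∈ Ideal.span (Set.range f))
    (q : MvPolynomial (Fin n) ℂ) (hq : q ∈ Q) : Phi α ξ φ q = 0 := by
  obtain ⟨p, hp0, hpq⟩ := hcomp q hq
  have hspan : Phi α ξ φ (p * q) = 0 := by
    rw [Ideal.mem_span_range_iff_exists_fun] at hpq
    obtain ⟨c, hc⟩ := hpq
    rw [← hc, Phi_finsum]
    apply Finset.sum_eq_zero
    intro m _
    rw [Phi_mul α ξ φ hr Hc, Hf m, Matrix.mulVec_zero]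
  rw [Phi_mul α ξ φ hr Hc] at hspan
  exact mulVec_cancel (NM_isUnit α ξ φ hr p hp0) hspan

lemma sub_C_mem_span {σT : Type} (ν : σT → ℂ) (p : MvPolynomial σT ℂ) :
    p - C (aeval ν p) ∈ Ideal.span {g | ∃ v, g = X v - C (ν v)} := by
  induction p using MvPolynomial.induction_on with
  | C a =>
    rw [aeval_C]
    simp only [Algebra.algebraMap_self, RingHom.id_apply, sub_self]
    exact Ideal.zero_mem _
  | add p q hp hq =>
    rw [map_add, C_add]
    have := Ideal.add_mem _ hp hq
    convert this using 1
    ring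
  | mul_X p v hp =>
    have h1 : p * X v - C (aeval ν (p * X v))
        = (p - C (aeval ν p)) * X v + C (aeval ν p) * (X v - C (ν v)) := by
      rw [map_mul, aeval_X, C_mul]
      ring
    rw [h1]
    exact Ideal.add_mem _ (Ideal.mul_mem_right _ _ hp)
      (Ideal.mul_mem_left _ _ (Ideal.subset_span ⟨v, rfl⟩))

lemma mem_span_of_aeval_eq_zero {σT : Type} (ν : σT → ℂ) (p : MvPolynomial σT ℂ)
    (hp : aeval ν p = 0) : p ∈ Ideal.span {g | ∃ v, g = X v - C (ν v)} := by
  have := sub_C_mem_span ν p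
  rwa [hp, map_zero, sub_zero] at this


lemma phi_X_eq {S : Type} [CommRing S] [Algebra ℂ S] {N : ℕ}
    (φ : MvPolynomial (Subtype (UsedPair α)) ℂ →ₐ[ℂ] S)
    (f : Fin N → MvPolynomial (Fin n) ℂ)
    (hr : ∀ j, mdeg (α j) < δ)
    (Hc : ∀ i i', Mm α φ i * Mm α φ i' = Mm α φ i' * Mm α φ i)
    (HPhif : ∀ k, Phi α ξ φ (f k) = 0)
    (hcomp : ∀ q ∈ Q, ∃ p, eval ξ p ≠ 0 ∧ p * q ∈ Ideal.span (Set.range f))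
    (b : Module.Basis (Fin δ) ℂ (MvPolynomial (Fin n) ℂ ⧸ Q))
    (hb : ∀ i, b i = Ideal.Quotient.mk Q (xpow ξ (α i)))
    (hdual : ∀ i, ∀ p ∈ Q, dapply ξ (Λ i) p = 0)
    (hpair : ∀ i j, dapply ξ (Λ i) (xpow ξ (α j)) = if i = j then 1 else 0)
    (hinj : Function.Injective α) (h0 : α 0 = 0)
    (hconn : ∀ j, α j ≠ 0 → ∃ (k : Fin δ) (i : Fin n), α j = α k + Finsupp.single i 1)
    (v : Subtype (UsedPair α)) :
    φ (X v) = algebraMap ℂ S (nuf α Λ v) := by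
  obtain ⟨⟨j, β⟩, hv⟩ := v
  have hv' := hv
  obtain ⟨k, i, hβ, hnot, hlt⟩ := hv'
  simp only at hβ hnot hlt
  have hpmm : pmm α ℂ i j k = X (⟨(j, β), hv⟩ : Subtype (UsedPair α)) := by
    rw [pmm, Matrix.of_apply]
    rw [if_neg (fun hc => hnot j (by rw [hc, ← hβ]))]
    rw [dif_neg (fun hc => by obtain ⟨l, hl⟩ := hc; exact hnot l (by rw [hl, ← hβ]))]
    rw [dif_pos hlt]
    congr 1
    exact Subtype.ext (by simp only; rw [← hβ])
  have h1 : φ (X (⟨(j, β), hv⟩ : Subtype (UsedPair α))) = Mm α φ i j k := by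
    rw [← hpmm]; rfl
  have h2 : Mm α φ i j k = ((Mm α φ i).mulVec (Pi.single k 1)) j := by
    rw [Matrix.mulVec_single]
    exact (mul_one _).symm
  have h3 := Pm_alpha_mulVec α φ Hc hinj h0 hconn k
  have h4 : ((Mm α φ i).mulVec (Pi.single k 1)) j
      = ((Pm α φ β).mulVec (Pi.single 0 1)) j := by
    rw [← h3, Matrix.mulVec_mulVec, ← Pm_shift α φ Hc, ← hβ]
  have h5 : ((Pm α φ β).mulVec (Pi.single 0 1)) j = Phi α ξ φ (xpow ξ β) j := by
    rw [Phi_xpow α ξ φ hr Hc β]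
  -- coordinate expansion
  have hcoord := coord α ξ Λ Q b hb hdual hpair (xpow ξ β)
  have hvan := Phi_vanish_Q α ξ Q φ f hr Hc HPhif hcomp _ hcoord
  have hexp : Phi α ξ φ (xpow ξ β)
      = ∑ k', (dapply ξ (Λ k') (xpow ξ β)) • Phi α ξ φ (xpow ξ (α k')) := by
    have hs := Phi_sub α ξ φ (xpow ξ β)
      (∑ k', (dapply ξ (Λ k') (xpow ξ β)) • xpow ξ (α k'))
    rw [hvan] at hs
    have h6 : Phi α ξ φ (∑ k', (dapply ξ (Λ k') (xpow ξ β)) • xpow ξ (α k'))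
        = ∑ k', (dapply ξ (Λ k') (xpow ξ β)) • Phi α ξ φ (xpow ξ (α k')) := by
      rw [Phi_finsum]
      exact Finset.sum_congr rfl fun k' _ => Phi_smul α ξ φ _ _
    rw [h6] at hs
    have hzz := sub_eq_zero.mp hs.symm
    exact hzz
  have hsingle : ∀ k', Phi α ξ φ (xpow ξ (α k')) = Pi.single k' 1 := fun k' => by
    rw [Phi_xpow α ξ φ hr Hc, Pm_alpha_mulVec α φ Hc hinj h0 hconn]
  rw [h1, h2, h4, h5, hexp]
  have h7 : ∀ k', ((dapply ξ (Λ k') (xpow ξ β)) • Phi α ξ φ (xpow ξ (α k'))) j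
      = (dapply ξ (Λ k') (xpow ξ β)) • ((Pi.single k' 1 : Fin δ → S) j) := by
    intro k'
    rw [hsingle k']
    rfl
  rw [Finset.sum_apply]
  rw [Finset.sum_congr rfl (fun k' _ => h7 k')]
  rw [Finset.sum_eq_single_of_mem j (Finset.mem_univ j)]
  · rw [Pi.single_eq_same, dapply_xpow, Algebra.algebraMap_eq_smul_one]
    rfl
  · intro k' _ hk'
    rw [Pi.single_eq_of_ne (Ne.symm hk'), smul_zero]

end Struct

end Aux

/-- Theorem 1: the ideal of `ℂ[μ]` generated by the entries of
`N_{ξ,μ}(f_k)` and of the commutators `Mᵢ(μ)Mⱼ(μ) − Mⱼ(μ)Mᵢ(μ)` is the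
maximal ideal `𝔪_ν = (μ_{α,β} − ν_{α,β})` of the dual-basis coefficients. -/

theorem multiplicity_structure_equations {n δ N : ℕ} [NeZero δ]
    (f : Fin N → MvPolynomial (Fin n) ℂ) (ξ : Fin n → ℂ)
    (hroot : ∀ m, eval ξ (f m) = 0)
    (hiso : ∃ U ∈ nhds ξ, ∀ x ∈ U, (∀ m, eval x (f m) = 0) → x = ξ)
    (Q : Ideal (MvPolynomial (Fin n) ℂ))
    (hIQ : Ideal.span (Set.range f) ≤ Q)
    (hprim : Q.IsPrimary) (hrad : Q.radical = maxIdeal ξ)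
    (hcomp : ∀ q ∈ Q, ∃ p, eval ξ p ≠ 0 ∧ p * q ∈ Ideal.span (Set.range f))
    -- the orthogonal primal-dual pair of bases for ℂ[x]/Q
    (α : Fin δ → (Fin n →₀ ℕ)) (Λ : Fin δ → ((Fin n →₀ ℕ) →₀ ℂ))
    (b : Module.Basis (Fin δ) ℂ (MvPolynomial (Fin n) ℂ ⧸ Q))
    (hb : ∀ i, b i = Ideal.Quotient.mk Q (xpow ξ (α i)))
    (h0 : α 0 = 0)
    (hconn : ∀ j, α j ≠ 0 → ∃ (k : Fin δ) (i : Fin n),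
      α j = α k + Finsupp.single i 1)
    (hdual : ∀ i, ∀ p ∈ Q, dapply ξ (Λ i) p = 0)
    (hlead : ∀ i, (Λ i) (α i) = (mfact (α i) : ℂ)⁻¹)
    (hsupp : ∀ i β, β ∈ (Λ i).support →
      mdeg β ≤ mdeg (α i) ∧ (β = α i ∨ β ∉ Set.range α))
    (hpair : ∀ i j, dapply ξ (Λ i) (xpow ξ (α j)) = if i = j then 1 else 0)
    (hord : ∀ i j, i ≤ j → mdeg (α i) ≤ mdeg (α j)) :
    -- ν_{α_j,β}: coefficients of the dual basis
    Ideal.span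
        ({g | ∃ (k : Fin N) (j : Fin δ), g = pnfXi α ξ (f k) j} ∪
         {g | ∃ (i i' : Fin n) (j k : Fin δ),
            g = (pmm α ℂ i * pmm α ℂ i' - pmm α ℂ i' * pmm α ℂ i) j k})
      = Ideal.span {g | ∃ v : Subtype (UsedPair α),
          g = X v - C ((Λ v.1.1) v.1.2 * (mfact v.1.2 : ℂ))} := by
  classical
  have hinj : Function.Injective α := Aux.alpha_inj α ξ Q b hb
  have hr : ∀ j, mdeg (α j) < δ := Aux.mdeg_alpha_lt α h0 hconn
  apply le_antisymm
  · rw [Ideal.span_le]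
    intro g hg
    rw [SetLike.mem_coe]
    have hCset : {g : MvPolynomial (Subtype (UsedPair α)) ℂ | ∃ v : Subtype (UsedPair α),
        g = X v - C ((Λ v.1.1) v.1.2 * (mfact v.1.2 : ℂ))}
        = {g | ∃ v : Subtype (UsedPair α), g = X v - C (Aux.nuf α Λ v)} := rfl
    rw [hCset]
    rcases hg with hg | hg
    · obtain ⟨k, j, rfl⟩ := hg
      apply Aux.mem_span_of_aeval_eq_zero
      rw [show (aeval (Aux.nuf α Λ)) (pnfXi α ξ (f k) j)
          = Aux.Phi α ξ (aeval (Aux.nuf α Λ)) (f k) j from Aux.map_pnfXi α ξ _ _ j]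
      rw [Aux.Phi_eval_eq_dapply α ξ Λ Q h0 hconn hinj b hb hdual hsupp hpair]
      exact hdual j (f k) (hIQ (Ideal.subset_span ⟨k, rfl⟩))
    · obtain ⟨i, i', j, k, rfl⟩ := hg
      apply Aux.mem_span_of_aeval_eq_zero
      rw [Aux.map_comm_entry α (aeval (Aux.nuf α Λ)) i i' j k]
      rw [Aux.eval_pmm α ξ Λ hinj hsupp hpair, Aux.eval_pmm α ξ Λ hinj hsupp hpair,
        Aux.Tm_comm α ξ Λ Q b hb hdual hpair i i', sub_self, Matrix.zero_apply]
  · rw [Ideal.span_le]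
    rintro g ⟨v, rfl⟩
    rw [SetLike.mem_coe]
    set J := Ideal.span ({g | ∃ (k : Fin N) (j : Fin δ), g = pnfXi α ξ (f k) j} ∪
         {g | ∃ (i i' : Fin n) (j k : Fin δ),
            g = (pmm α ℂ i * pmm α ℂ i' - pmm α ℂ i' * pmm α ℂ i) j k}) with hJ
    set φ : MvPolynomial (Subtype (UsedPair α)) ℂ →ₐ[ℂ]
        (MvPolynomial (Subtype (UsedPair α)) ℂ ⧸ J) := Ideal.Quotient.mkₐ ℂ J with hφ
    have hmk : ∀ x, φ x = Ideal.Quotient.mk J x := fun x => rfl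
    have HPhif : ∀ k, Aux.Phi α ξ φ (f k) = 0 := by
      intro k
      funext j
      rw [Pi.zero_apply, ← Aux.map_pnfXi α ξ φ (f k) j, hmk,
        Ideal.Quotient.eq_zero_iff_mem]
      exact Ideal.subset_span (Or.inl ⟨k, j, rfl⟩)
    have Hc : ∀ i i', Aux.Mm α φ i * Aux.Mm α φ i' = Aux.Mm α φ i' * Aux.Mm α φ i := by
      intro i i'
      ext j k
      have h00 : φ ((pmm α ℂ i * pmm α ℂ i' - pmm α ℂ i' * pmm α ℂ i) j k) = 0 := by
        rw [hmk, Ideal.Quotient.eq_zero_iff_mem]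
        exact Ideal.subset_span (Or.inr ⟨i, i', j, k, rfl⟩)
      rw [Aux.map_comm_entry α φ i i' j k, Matrix.sub_apply] at h00
      exact sub_eq_zero.mp h00
    have hX := Aux.phi_X_eq α ξ Λ Q φ f hr Hc HPhif hcomp b hb hdual hpair hinj h0 hconn v
    have hfin : φ (X v - C ((Λ v.1.1) v.1.2 * (mfact v.1.2 : ℂ))) = 0 := by
      rw [map_sub, hX]
      have hCC : φ (C (Aux.nuf α Λ v)) = algebraMap ℂ _ (Aux.nuf α Λ v) := by
        rw [← MvPolynomial.algebraMap_eq]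
        exact φ.commutes _
      rw [show C ((Λ v.1.1) v.1.2 * (mfact v.1.2 : ℂ))
          = C (Aux.nuf α Λ v) from rfl, hCC, sub_self]
    rw [hmk] at hfin
    exact Ideal.Quotient.eq_zero_iff_mem.mp hfin

end
end
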